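/- arXiv:1908.09196 — 7 statements merged into one kernel-verified Lean document; each statement's English description precedes it below -/
import Mathlib

section
/- Let h ∈ ℤ with h ≠ 1 and let n ≥ 1 be an integer. Let a, b ∈ ℂ((t)) with a non-constant, satisfying a'(t) = n·t^{n(1−h)−1}·b(t) in ℂ((t)). Assume the pair (a, b) is irreducible, i.e., there is no integer m ≥ 2 such that every j ∈ ℤ with a_j ≠ 0 is divisible by m and every j ∈ ℤ with b_j ≠ 0 is divisible by m. Then there is no integer m ≥ 2 which divides n and which divides every j ∈ ℤ with a_j ≠ 0; equivalently, n is the ramification order of the formal Puiseux series y(x) = a(x^{1/n}), i.e., the least n' ≥ 1 with y ∈ ℂ((x^{1/n'})). -/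
/-- Formal derivative of a formal Laurent series: the coefficient of `t^j` in `a'`
is `(j+1) * a_{j+1}`. -/
noncomputable def lderiv (a : LaurentSeries ℂ) : LaurentSeries ℂ where
  coeff j := ((j + 1 : ℤ) : ℂ) * a.coeff (j + 1)
  isPWO_support' := by
    have hsub : Function.support (fun j : ℤ => ((j + 1 : ℤ) : ℂ) * a.coeff (j + 1)) ⊆
        (fun j : ℤ => j - 1) '' a.support := by
      intro j hj
      have : a.coeff (j + 1) ≠ 0 := by
        intro h
        apply hj
        simp [Function.mem_support, h]
      exact ⟨j + 1, this, by ring⟩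
    exact (a.isPWO_support.image_of_monotone (fun x y h => by omega)).mono hsub

/-- If `(a, b)` is an irreducible pair of Laurent series satisfying
`a'(t) = n t^{n(1-h)-1} b(t)`, then no integer `m ≥ 2` divides `n` together with
all exponents appearing in `a`; i.e. `n` is the ramification order of
`y(x) = a(x^{1/n})`. -/
theorem ramification_order_of_solution_parametrization
    (h : ℤ) (hh : h ≠ 1) (n : ℕ) (hn : 1 ≤ n)
    (a b : LaurentSeries ℂ) (ha : ∀ c : ℂ, a ≠ HahnSeries.C c)
    (hab : lderiv a =
      (n : LaurentSeries ℂ) * HahnSeries.single ((n : ℤ) * (1 - h) - 1) (1 : ℂ) * b)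
    (hirr : ¬ ∃ m : ℕ, 2 ≤ m ∧ (∀ j : ℤ, a.coeff j ≠ 0 → (m : ℤ) ∣ j) ∧
      (∀ j : ℤ, b.coeff j ≠ 0 → (m : ℤ) ∣ j)) :
    ¬ ∃ m : ℕ, 2 ≤ m ∧ m ∣ n ∧ ∀ j : ℤ, a.coeff j ≠ 0 → (m : ℤ) ∣ j := by
  rintro ⟨m, hm2, hmn, hma⟩
  apply hirr
  refine ⟨m, hm2, hma, ?_⟩
  intro k hk
  set N : ℤ := (n : ℤ) * (1 - h) - 1 with hN
  have key : ((N + k + 1 : ℤ) : ℂ) * a.coeff (N + k + 1) = (n : ℂ) * b.coeff k := by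
    have hone : (n : LaurentSeries ℂ) * HahnSeries.single N (1 : ℂ)
        = HahnSeries.single N ((n : ℂ)) := by
      rw [← map_natCast (HahnSeries.C : ℂ →+* LaurentSeries ℂ) n, HahnSeries.C_apply,
        HahnSeries.single_mul_single, zero_add, mul_one]
    have := congrArg (fun x : LaurentSeries ℂ => x.coeff (k + N)) hab
    simp only [lderiv, hone, HahnSeries.coeff_single_mul_add] at this
    rw [show k + N + 1 = N + k + 1 by ring] at this
    exact this
  have hnC : (n : ℂ) ≠ 0 := Nat.cast_ne_zero.mpr (by omega)
  have hbne : (n : ℂ) * b.coeff k ≠ 0 := mul_ne_zero hnC hk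
  have hane : a.coeff (N + k + 1) ≠ 0 := by
    intro h0; rw [h0, mul_zero] at key; exact hbne key.symm
  have hdvd : (m : ℤ) ∣ N + k + 1 := hma _ hane
  have hmn' : (m : ℤ) ∣ (n : ℤ) := Int.natCast_dvd_natCast.mpr hmn
  have : N + k + 1 = (n : ℤ) * (1 - h) + k := by ring
  rw [this] at hdvd
  exact (dvd_add_right (Dvd.dvd.mul_right hmn' _)).mp hdvd
end

section
/- Let ν ≥ 1 be an integer. A formal power series s ∈ ℂ[[t]] with ord(s) = 1 satisfies s(t)^{ν−1}·s'(t) = t^{ν−1} if and only if s(t) = α·t for some α ∈ ℂ with α^ν = 1. In particular, this equation has exactly ν solutions s ∈ ℂ[[t]] with ord(s) = 1. -/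
open PowerSeries

private lemma dfun_eq (f : PowerSeries ℂ) : PowerSeries.derivative ℂ f = f.derivativeFun := rfl

private lemma dX : (PowerSeries.X : PowerSeries ℂ).derivativeFun = 1 := by
  rw [← dfun_eq]; exact PowerSeries.derivative_X

private lemma key (ν : ℕ) (hν : 1 ≤ ν) (α : ℂ) (hα : α ^ ν = 1) :
    (PowerSeries.C α * PowerSeries.X) ^ (ν - 1) *
      (PowerSeries.C α * PowerSeries.X).derivativeFun = PowerSeries.X ^ (ν - 1) := by
  have hd : (PowerSeries.C α * PowerSeries.X).derivativeFun = PowerSeries.C α := by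
    rw [PowerSeries.derivativeFun_mul, dX, ← dfun_eq (PowerSeries.C α), PowerSeries.derivative_C]
    simp [smul_eq_mul]
  rw [hd, mul_pow, ← map_pow, mul_assoc, mul_comm (PowerSeries.X ^ (ν-1)), ← mul_assoc,
    ← map_mul, pow_sub_one_mul (by omega : ν ≠ 0), hα, map_one, one_mul]

private lemma fwd (ν : ℕ) (hν : 1 ≤ ν) (s : PowerSeries ℂ) (hord : s.order = 1)
    (h : s ^ (ν - 1) * s.derivativeFun = PowerSeries.X ^ (ν - 1)) :
    ∃ α : ℂ, α ^ ν = 1 ∧ s = PowerSeries.C α * PowerSeries.X := by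
  have hν0 : ν ≠ 0 := by omega
  have hc0 : PowerSeries.constantCoeff s = 0 := by
    have := PowerSeries.coeff_of_lt_order (φ := s) 0 (by rw [hord]; norm_num)
    simpa using this
  -- s ^ ν = X ^ ν
  have hpow : s ^ ν = PowerSeries.X ^ ν := by
    apply PowerSeries.derivative.ext
    · rw [Derivation.leibniz_pow, Derivation.leibniz_pow]
      simp only [smul_eq_mul, dfun_eq, h, dX, mul_one]
    · simp [map_pow, hc0, zero_pow hν0, PowerSeries.constantCoeff_X]
  obtain ⟨v, hv⟩ : (PowerSeries.X : PowerSeries ℂ) ∣ s := PowerSeries.X_dvd_iff.mpr hc0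
  have hXν : (PowerSeries.X : PowerSeries ℂ) ^ ν ≠ 0 := pow_ne_zero _ PowerSeries.X_ne_zero
  have hvν : v ^ ν = 1 := by
    have : PowerSeries.X ^ ν * v ^ ν = PowerSeries.X ^ ν * 1 := by
      rw [mul_one, ← mul_pow, ← hv, hpow]
    exact mul_left_cancel₀ hXν this
  have hvne : v ≠ 0 := by
    intro h0; rw [h0, zero_pow hν0] at hvν; exact zero_ne_one hvν
  have hdv : PowerSeries.derivative ℂ v = 0 := by
    have h1 : PowerSeries.derivative ℂ (v ^ ν) = 0 := by rw [hvν]; simp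
    rw [Derivation.leibniz_pow] at h1
    have h2 : (ν : PowerSeries ℂ) * (v ^ (ν - 1) * PowerSeries.derivative ℂ v) = 0 := by
      rw [← h1]; simp [smul_eq_mul, nsmul_eq_mul]
    rcases mul_eq_zero.mp h2 with h3 | h3
    · exfalso
      have := congrArg (PowerSeries.constantCoeff) h3
      simp [hν0] at this
    · rcases mul_eq_zero.mp h3 with h4 | h4
      · exact absurd h4 (pow_ne_zero _ hvne)
      · exact h4
  set α := PowerSeries.constantCoeff v with hαdef
  have hvC : v = PowerSeries.C α := by
    ext n
    cases n with
    | zero => simp [hαdef]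
    | succ n =>
      have := congrArg (PowerSeries.coeff n) hdv
      rw [PowerSeries.coeff_derivative] at this
      simp only [map_zero] at this
      have hn1 : ((n : ℂ) + 1) ≠ 0 := by exact_mod_cast n.succ_ne_zero
      have : PowerSeries.coeff (n + 1) v = 0 := by
        rcases mul_eq_zero.mp this with h' | h'
        · exact h'
        · exact absurd h' hn1
      simp [this, PowerSeries.coeff_C]
  refine ⟨α, ?_, ?_⟩
  · have := congrArg (PowerSeries.constantCoeff) hvν
    simpa [map_pow, hαdef] using this
  · rw [hv, hvC, mul_comm]

private lemma ord_one (ν : ℕ) (hν : 1 ≤ ν) (α : ℂ) (hα : α ^ ν = 1) :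
    (PowerSeries.C α * PowerSeries.X : PowerSeries ℂ).order = 1 := by
  have hα0 : α ≠ 0 := by
    intro h; rw [h, zero_pow (by omega : ν ≠ 0)] at hα; exact zero_ne_one hα
  have : PowerSeries.C α * PowerSeries.X = PowerSeries.monomial 1 α := by
    ext n
    simp [PowerSeries.coeff_monomial, PowerSeries.coeff_C_mul, PowerSeries.coeff_X,
      mul_ite, mul_one, mul_zero]
  rw [this]
  simpa using PowerSeries.order_monomial_of_ne_zero 1 α hα0

/-- For `ν ≥ 1`, an order-one formal power series `s` satisfies
`s(t)^{ν-1} s'(t) = t^{ν-1}` if and only if `s(t) = α t` with `α^ν = 1`;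
in particular this equation has exactly `ν` order-one solutions. -/
theorem order_one_solutions_of_separable_equation (ν : ℕ) (hν : 1 ≤ ν) :
    (∀ s : PowerSeries ℂ, s.order = 1 →
      (s ^ (ν - 1) * s.derivativeFun = PowerSeries.X ^ (ν - 1) ↔
        ∃ α : ℂ, α ^ ν = 1 ∧ s = PowerSeries.C α * PowerSeries.X)) ∧
    {s : PowerSeries ℂ | s.order = 1 ∧
      s ^ (ν - 1) * s.derivativeFun = PowerSeries.X ^ (ν - 1)}.ncard = ν := by
  constructor
  · intro s hord
    constructor
    · exact fwd ν hν s hord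
    · rintro ⟨α, hα, rfl⟩
      exact key ν hν α hα
  · have hset : {s : PowerSeries ℂ | s.order = 1 ∧
        s ^ (ν - 1) * s.derivativeFun = PowerSeries.X ^ (ν - 1)} =
        (fun α : ℂ => PowerSeries.C α * PowerSeries.X) '' {α : ℂ | α ^ ν = 1} := by
      ext s
      constructor
      · rintro ⟨h1, h2⟩
        obtain ⟨α, hα, rfl⟩ := fwd ν hν s h1 h2
        exact ⟨α, hα, rfl⟩
      · rintro ⟨α, hα, rfl⟩
        exact ⟨ord_one ν hν α hα, key ν hν α hα⟩
    rw [hset, Set.ncard_image_of_injective _ (fun a b hab => by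
      have := congrArg (PowerSeries.coeff 1) hab
      simpa [PowerSeries.coeff_C_mul, PowerSeries.coeff_X] using this)]
    have hroots : {α : ℂ | α ^ ν = 1} = ↑(Polynomial.nthRootsFinset ν (1 : ℂ)) := by
      ext α
      simp [Polynomial.mem_nthRootsFinset (by omega : 0 < ν)]
    rw [hroots, Set.ncard_coe_finset]
    exact (Complex.isPrimitiveRoot_exp ν (by omega)).card_nthRootsFinset
end

section
/- Let f, g ∈ ℂ[[t,z]] be formal power series in two variables with g(0,0) ≠ 0 and f(0,0) = 0, and set λ := (∂f/∂z)(0,0)/g(0,0). If λ is not a positive integer, then there exists exactly one formal power series z ∈ ℂ[[t]] with zero constant term satisfying the Briot–Bouquet equation g(t, z(t))·t·z'(t) = f(t, z(t)) in ℂ[[t]]. -/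
/-- The coefficient `f_{i,j}` of `t^i z^j` in a two-variable formal power series,
where variable `0` is `t` and variable `1` is `z`. -/
noncomputable def fcoeff (f : MvPowerSeries (Fin 2) ℂ) (i j : ℕ) : ℂ :=
  MvPowerSeries.coeff (Finsupp.single 0 i + Finsupp.single 1 j) f

/-- Substitution `f(t, z(t))` (intended for `z` with zero constant term, in which
case `coeff n (X^i * z^j) = 0` for `i + j > n`). -/
noncomputable def subst2 (f : MvPowerSeries (Fin 2) ℂ) (z : PowerSeries ℂ) : PowerSeries ℂ :=
  PowerSeries.mk fun n => ∑ i ∈ Finset.range (n + 1), ∑ j ∈ Finset.range (n + 1),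
    fcoeff f i j * (PowerSeries.coeff n) (PowerSeries.X ^ i * z ^ j)

open PowerSeries

lemma BB.pow_sub_dvd {z w : PowerSeries ℂ} (hz : constantCoeff z = 0)
    (hw : constantCoeff w = 0) {n : ℕ} (h : ∀ i < n, coeff i z = coeff i w)
    {j : ℕ} (hj : 1 ≤ j) : (X : PowerSeries ℂ) ^ (n + j - 1) ∣ z ^ j - w ^ j := by
  have hXz : (X : PowerSeries ℂ) ∣ z := X_dvd_iff.mpr hz
  have hXw : (X : PowerSeries ℂ) ∣ w := X_dvd_iff.mpr hw
  have hzw : (X : PowerSeries ℂ) ^ n ∣ z - w := by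
    rw [X_pow_dvd_iff]; intro m hm; simp [h m hm]
  rw [← geom_sum₂_mul z w j]
  have hs : (X : PowerSeries ℂ) ^ (j - 1) ∣ ∑ i ∈ Finset.range j, z ^ i * w ^ (j - 1 - i) := by
    apply Finset.dvd_sum
    intro i hi
    have hij : i ≤ j - 1 := Nat.le_sub_one_of_lt (Finset.mem_range.mp hi)
    have hX : (X : PowerSeries ℂ) ^ (j - 1) = X ^ i * X ^ (j - 1 - i) := by
      rw [← pow_add]; congr 1; omega
    rw [hX]
    exact mul_dvd_mul (pow_dvd_pow_of_dvd hXz i) (pow_dvd_pow_of_dvd hXw _)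
  have he : n + j - 1 = (j - 1) + n := by omega
  rw [he, pow_add]
  exact mul_dvd_mul hs hzw

lemma BB.coeff_term_eq {z w : PowerSeries ℂ} (hz : constantCoeff z = 0)
    (hw : constantCoeff w = 0) {n : ℕ} (h : ∀ i < n, coeff i z = coeff i w)
    (i j m : ℕ) (hm : m ≤ n) (h2 : i = 0 → j = 1 → m < n) :
    coeff m (X ^ i * z ^ j) = coeff m (X ^ i * w ^ j) := by
  rcases Nat.eq_zero_or_pos j with hj | hj
  · subst hj; simp
  rw [mul_comm (X ^ i), mul_comm (X ^ i), coeff_mul_X_pow', coeff_mul_X_pow']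
  split_ifs with hi
  · have hd := BB.pow_sub_dvd hz hw h hj
    rw [X_pow_dvd_iff] at hd
    have hlt : m - i < n + j - 1 := by
      by_cases hij : i = 0 ∧ j = 1
      · have := h2 hij.1 hij.2; omega
      · omega
    have h0 : coeff (m - i) (z ^ j - w ^ j) = 0 := hd _ hlt
    rw [map_sub, sub_eq_zero] at h0
    exact h0
  · rfl

lemma BB.coeff_subst2_eq_of_lt {z w : PowerSeries ℂ} (hz : constantCoeff z = 0)
    (hw : constantCoeff w = 0) {n : ℕ} (h : ∀ i < n, coeff i z = coeff i w)
    (F : MvPowerSeries (Fin 2) ℂ) {m : ℕ} (hm : m < n) :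
    coeff m (subst2 F z) = coeff m (subst2 F w) := by
  simp only [subst2, coeff_mk]
  refine Finset.sum_congr rfl fun i _ => Finset.sum_congr rfl fun j _ => ?_
  rw [BB.coeff_term_eq hz hw h i j m hm.le (fun _ _ => hm)]

lemma BB.coeff_zero_subst2 {z : PowerSeries ℂ} (hz : constantCoeff z = 0)
    (F : MvPowerSeries (Fin 2) ℂ) : coeff 0 (subst2 F z) = fcoeff F 0 0 := by
  simp [subst2, coeff_mk]

lemma BB.keyR (F : MvPowerSeries (Fin 2) ℂ) {z w : PowerSeries ℂ}
    (hz : constantCoeff z = 0) (hw : constantCoeff w = 0) {n : ℕ} (hn : 1 ≤ n)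
    (h : ∀ i < n, coeff i z = coeff i w) :
    coeff n (subst2 F z) - fcoeff F 0 1 * coeff n z
      = coeff n (subst2 F w) - fcoeff F 0 1 * coeff n w := by
  simp only [subst2, coeff_mk]
  rw [← Finset.sum_product', ← Finset.sum_product']
  have hmem : ((0 : ℕ), (1 : ℕ)) ∈ Finset.range (n + 1) ×ˢ Finset.range (n + 1) := by
    simp [Finset.mem_product]; omega
  rw [Finset.sum_eq_sum_sdiff_singleton_add hmem, Finset.sum_eq_sum_sdiff_singleton_add hmem]
  have hS : ∑ p ∈ (Finset.range (n + 1) ×ˢ Finset.range (n + 1)) \ {((0:ℕ),(1:ℕ))},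
      fcoeff F p.1 p.2 * coeff n (X ^ p.1 * z ^ p.2)
      = ∑ p ∈ (Finset.range (n + 1) ×ˢ Finset.range (n + 1)) \ {((0:ℕ),(1:ℕ))},
      fcoeff F p.1 p.2 * coeff n (X ^ p.1 * w ^ p.2) := by
    refine Finset.sum_congr rfl fun p hp => ?_
    have hne : p ≠ ((0:ℕ),(1:ℕ)) := by
      intro hpe; exact (Finset.mem_sdiff.mp hp).2 (by simp [hpe])
    rw [BB.coeff_term_eq hz hw h p.1 p.2 n le_rfl
      (fun h1 h2 => absurd (Prod.ext h1 h2) hne)]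
  rw [hS]
  simp only [pow_zero, one_mul, pow_one]
  ring

lemma BB.coeff_X_mul_deriv (p : PowerSeries ℂ) (m : ℕ) :
    coeff m (X * p.derivativeFun) = (m : ℂ) * coeff m p := by
  cases m with
  | zero => simp
  | succ m => rw [coeff_succ_X_mul, show p.derivativeFun = derivative ℂ p from rfl, coeff_derivative]; push_cast; ring

lemma BB.keyL (G : MvPowerSeries (Fin 2) ℂ) {z w : PowerSeries ℂ}
    (hz : constantCoeff z = 0) (hw : constantCoeff w = 0) {n : ℕ}
    (h : ∀ i < n, coeff i z = coeff i w) :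
    coeff n (subst2 G z * (X * z.derivativeFun)) - (n : ℂ) * fcoeff G 0 0 * coeff n z
      = coeff n (subst2 G w * (X * w.derivativeFun)) - (n : ℂ) * fcoeff G 0 0 * coeff n w := by
  rw [PowerSeries.coeff_mul, PowerSeries.coeff_mul,
    Finset.Nat.sum_antidiagonal_eq_sum_range_succ_mk,
    Finset.Nat.sum_antidiagonal_eq_sum_range_succ_mk]
  simp only [BB.coeff_X_mul_deriv]
  rw [Finset.sum_range_succ', Finset.sum_range_succ']
  simp only [Nat.sub_zero]
  rw [BB.coeff_zero_subst2 hz, BB.coeff_zero_subst2 hw]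
  have hS : ∑ k ∈ Finset.range n, coeff (k+1) (subst2 G z) * ((↑(n - (k+1)) : ℂ) * coeff (n - (k+1)) z)
      = ∑ k ∈ Finset.range n, coeff (k+1) (subst2 G w) * ((↑(n - (k+1)) : ℂ) * coeff (n - (k+1)) w) := by
    refine Finset.sum_congr rfl fun k hk => ?_
    have hk' : k + 1 ≤ n := Finset.mem_range.mp hk
    rcases eq_or_lt_of_le hk' with he | hlt
    · have hnk : n - (k+1) = 0 := by omega
      simp [hnk]
    · rw [BB.coeff_subst2_eq_of_lt hz hw h G hlt, h (n - (k+1)) (by omega)]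
  rw [hS]
  ring

/-- The combined key lemma: the `n`-th coefficient of the Briot-Bouquet defect depends
on the coefficients below `n` plus a linear term in the `n`-th coefficient. -/
lemma BB.key (f g : MvPowerSeries (Fin 2) ℂ) {z w : PowerSeries ℂ}
    (hz : constantCoeff z = 0) (hw : constantCoeff w = 0) {n : ℕ} (hn : 1 ≤ n)
    (h : ∀ i < n, coeff i z = coeff i w) :
    coeff n (subst2 g z * (X * z.derivativeFun)) - coeff n (subst2 f z)
      - ((n : ℂ) * fcoeff g 0 0 - fcoeff f 0 1) * coeff n z
    = coeff n (subst2 g w * (X * w.derivativeFun)) - coeff n (subst2 f w)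
      - ((n : ℂ) * fcoeff g 0 0 - fcoeff f 0 1) * coeff n w := by
  linear_combination (BB.keyL g hz hw h) - (BB.keyR f hz hw hn h)

/-- Recursively defined coefficients of the solution. -/
noncomputable def BBaux (f g : MvPowerSeries (Fin 2) ℂ) (n : ℕ) : ℂ :=
  if n = 0 then 0 else
    (coeff n (subst2 f (PowerSeries.mk fun i => if h : i < n then BBaux f g i else 0)) -
     coeff n (subst2 g (PowerSeries.mk fun i => if h : i < n then BBaux f g i else 0) *
       (X * (PowerSeries.mk fun i => if h : i < n then BBaux f g i else 0).derivativeFun)))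
      / ((n : ℂ) * fcoeff g 0 0 - fcoeff f 0 1)
termination_by n
decreasing_by all_goals exact h

lemma BBaux_zero (f g : MvPowerSeries (Fin 2) ℂ) : BBaux f g 0 = 0 := by
  rw [BBaux]; simp

lemma BBaux_succ (f g : MvPowerSeries (Fin 2) ℂ) {n : ℕ} (hn : n ≠ 0) :
    BBaux f g n =
    (coeff n (subst2 f (PowerSeries.mk fun i => if h : i < n then BBaux f g i else 0)) -
     coeff n (subst2 g (PowerSeries.mk fun i => if h : i < n then BBaux f g i else 0) *
       (X * (PowerSeries.mk fun i => if h : i < n then BBaux f g i else 0).derivativeFun)))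
      / ((n : ℂ) * fcoeff g 0 0 - fcoeff f 0 1) := by
  rw [BBaux]; simp [hn]

/-- Uniqueness of solutions. -/
lemma BB.uniq (f g : MvPowerSeries (Fin 2) ℂ)
    (hg : fcoeff g 0 0 ≠ 0)
    (hlambda : ∀ k : ℕ, 1 ≤ k → fcoeff f 0 1 / fcoeff g 0 0 ≠ (k : ℂ))
    {z w : PowerSeries ℂ}
    (hz0 : constantCoeff z = 0)
    (hz : subst2 g z * (X * z.derivativeFun) = subst2 f z)
    (hw0 : constantCoeff w = 0)
    (hw : subst2 g w * (X * w.derivativeFun) = subst2 f w) : z = w := by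
  have hD : ∀ n : ℕ, 1 ≤ n → (n : ℂ) * fcoeff g 0 0 - fcoeff f 0 1 ≠ 0 := by
    intro n hn heq
    apply hlambda n hn
    field_simp
    linear_combination -heq
  ext n
  induction n using Nat.strong_induction_on with
  | _ n ih =>
    rcases Nat.eq_zero_or_pos n with hn | hn
    · subst hn
      simp only [coeff_zero_eq_constantCoeff, hz0, hw0]
    · have hkey := BB.key f g hz0 hw0 hn ih
      rw [hz, hw] at hkey
      simp only [sub_self, zero_sub, neg_inj] at hkey
      exact mul_left_cancel₀ (hD n hn) hkey

/-- Briot–Bouquet: if `g(0,0) ≠ 0`, `f(0,0) = 0` and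
`λ = f_{0,1}/g_{0,0}` is not a positive integer, then the equation
`g(t, z(t)) · t · z'(t) = f(t, z(t))` has exactly one formal power series
solution `z` with zero constant term. -/
theorem briot_bouquet_unique_solution
    (f g : MvPowerSeries (Fin 2) ℂ)
    (hg : fcoeff g 0 0 ≠ 0) (hf : fcoeff f 0 0 = 0)
    (hlambda : ∀ k : ℕ, 1 ≤ k → fcoeff f 0 1 / fcoeff g 0 0 ≠ (k : ℂ)) :
    ∃! z : PowerSeries ℂ, PowerSeries.constantCoeff z = 0 ∧
      subst2 g z * (PowerSeries.X * z.derivativeFun) = subst2 f z := by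
  have hD : ∀ n : ℕ, 1 ≤ n → (n : ℂ) * fcoeff g 0 0 - fcoeff f 0 1 ≠ 0 := by
    intro n hn heq
    apply hlambda n hn
    field_simp
    linear_combination -heq
  set z : PowerSeries ℂ := PowerSeries.mk (BBaux f g) with hzdef
  have hz0 : constantCoeff z = 0 := by
    simp [hzdef, BBaux_zero]
  have hP0 : ∀ n : ℕ, constantCoeff
      (PowerSeries.mk fun i => if h : i < n then BBaux f g i else 0) = 0 := by
    intro n
    rw [← coeff_zero_eq_constantCoeff, coeff_mk]
    split
    · exact BBaux_zero f g
    · rfl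
  have hagree : ∀ n : ℕ, ∀ i < n,
      coeff i z = coeff i (PowerSeries.mk fun i => if h : i < n then BBaux f g i else 0) := by
    intro n i hi
    simp [hzdef, coeff_mk, hi]
  have heq : subst2 g z * (X * z.derivativeFun) = subst2 f z := by
    ext n
    rcases Nat.eq_zero_or_pos n with hn | hn
    · subst hn
      rw [PowerSeries.coeff_mul]
      rw [Finset.Nat.sum_antidiagonal_eq_sum_range_succ_mk]
      simp [BB.coeff_X_mul_deriv, BB.coeff_zero_subst2 hz0, hf]
    · set P : PowerSeries ℂ := PowerSeries.mk fun i => if h : i < n then BBaux f g i else 0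
        with hPdef
      have hPn : coeff n P = 0 := by simp [hPdef, coeff_mk]
      have hkey := BB.key f g hz0 (hP0 n) hn (hagree n)
      rw [hPn, mul_zero, sub_zero] at hkey
      have hzn : coeff n z = BBaux f g n := by simp [hzdef, coeff_mk]
      have hB : BBaux f g n = (coeff n (subst2 f P) -
          coeff n (subst2 g P * (X * P.derivativeFun)))
          / ((n : ℂ) * fcoeff g 0 0 - fcoeff f 0 1) := BBaux_succ f g (by omega)
      have hmul : ((n : ℂ) * fcoeff g 0 0 - fcoeff f 0 1) * coeff n z
          = coeff n (subst2 f P) - coeff n (subst2 g P * (X * P.derivativeFun)) := by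
        rw [hzn, hB, mul_div_cancel₀ _ (hD n hn)]
      linear_combination hkey + hmul
  refine ⟨z, ⟨hz0, heq⟩, ?_⟩
  intro y hy
  exact BB.uniq f g hg hlambda hy.1 hy.2 hz0 heq
end

section
/- Let L be a subfield of ℂ. Let f, g ∈ ℂ[[t,z]] with all coefficients f_{i,j}, g_{i,j} ∈ L, with g(0,0) ≠ 0, f(0,0) = 0, and such that λ := (∂f/∂z)(0,0)/g(0,0) is not a positive integer. Then all coefficients of the unique power series z ∈ ℂ[[t]] with zero constant term satisfying g(t, z(t))·t·z'(t) = f(t, z(t)) belong to L. -/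
open PowerSeries Finset

lemma bb_pow_coeff_mem (L : Subfield ℂ) (z : PowerSeries ℂ) (hz : constantCoeff z = 0)
    (n : ℕ) (hzn : ∀ k, k < n → coeff k z ∈ L) :
    ∀ j m : ℕ, m ≤ n → (j ≠ 1 ∨ m ≠ n) → coeff m (z ^ j) ∈ L := by
  intro j
  induction j with
  | zero =>
    intro m _ _
    rw [pow_zero, coeff_one]
    split
    · exact one_mem L
    · exact zero_mem L
  | succ j ih =>
    intro m hm hcond
    rcases Nat.eq_zero_or_pos j with rfl | hj
    · rw [pow_one]
      rcases hcond with h | h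
      · exact absurd rfl h
      · exact hzn m (lt_of_le_of_ne hm h)
    · rw [pow_succ, coeff_mul]
      apply sum_mem
      rintro ⟨a, b⟩ hab
      rw [HasAntidiagonal.mem_antidiagonal] at hab
      rcases Nat.eq_zero_or_pos b with rfl | hb
      · have h0 : coeff 0 z = 0 := by rw [coeff_zero_eq_constantCoeff]; exact hz
        simp only [h0, zero_mul, mul_zero]
        exact zero_mem L
      rcases Nat.eq_zero_or_pos a with rfl | ha
      · have h0 : coeff 0 (z ^ j) = 0 := by
          rw [coeff_zero_eq_constantCoeff, map_pow, hz, zero_pow hj.ne']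
        simp only [h0, zero_mul, mul_zero]
        exact zero_mem L
      · have han : a < n := by omega
        have hbn : b < n := by omega
        exact mul_mem (ih a han.le (Or.inr han.ne)) (hzn b hbn)

lemma bb_xpow_coeff_mem (L : Subfield ℂ) (z : PowerSeries ℂ) (hz : constantCoeff z = 0)
    (n : ℕ) (hzn : ∀ k, k < n → coeff k z ∈ L) :
    ∀ i j m : ℕ, m ≤ n → ¬(m = n ∧ i = 0 ∧ j = 1) →
      coeff m (PowerSeries.X ^ i * z ^ j) ∈ L := by
  intro i j m hm hne
  rw [coeff_X_pow_mul']
  split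
  · rename_i hi
    apply bb_pow_coeff_mem L z hz n hzn j (m - i) (by omega)
    by_cases hj : j = 1
    · right
      subst hj
      simp only [ne_eq]
      omega
    · exact Or.inl hj
  · exact zero_mem L

lemma bb_subst2_coeff_mem (L : Subfield ℂ) (h : MvPowerSeries (Fin 2) ℂ)
    (hhL : ∀ i j : ℕ, fcoeff h i j ∈ L) (z : PowerSeries ℂ) (hz : constantCoeff z = 0)
    (n : ℕ) (hzn : ∀ k, k < n → coeff k z ∈ L) (m : ℕ) (hm : m < n) :
    coeff m (subst2 h z) ∈ L := by
  rw [subst2, coeff_mk]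
  apply sum_mem
  intro i _
  apply sum_mem
  intro j _
  exact mul_mem (hhL i j)
    (bb_xpow_coeff_mem L z hz n hzn i j m hm.le (by omega))

/-- Briot–Bouquet, rationality: if all coefficients of `f` and `g` lie in a
subfield `L ⊆ ℂ`, `g(0,0) ≠ 0`, `f(0,0) = 0` and `λ = f_{0,1}/g_{0,0}` is not
a positive integer, then all coefficients of the (unique) solution `z` with zero
constant term of `g(t, z(t)) · t · z'(t) = f(t, z(t))` lie in `L`. -/
theorem briot_bouquet_coefficients_in_subfield
    (L : Subfield ℂ) (f g : MvPowerSeries (Fin 2) ℂ)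
    (hfL : ∀ i j : ℕ, fcoeff f i j ∈ L) (hgL : ∀ i j : ℕ, fcoeff g i j ∈ L)
    (hg : fcoeff g 0 0 ≠ 0) (hf : fcoeff f 0 0 = 0)
    (hlambda : ∀ k : ℕ, 1 ≤ k → fcoeff f 0 1 / fcoeff g 0 0 ≠ (k : ℂ)) :
    ∀ z : PowerSeries ℂ, PowerSeries.constantCoeff z = 0 →
      subst2 g z * (PowerSeries.X * z.derivativeFun) = subst2 f z →
      ∀ i : ℕ, PowerSeries.coeff i z ∈ L := by
  intro z hz heq n
  induction n using Nat.strong_induction_on with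
  | _ n ih =>
  rcases Nat.eq_zero_or_pos n with rfl | hn
  · rw [coeff_zero_eq_constantCoeff, hz]; exact zero_mem L
  -- the denominator n·g₀₀ − f₀₁ is nonzero and in L
  have hc : (n : ℂ) * fcoeff g 0 0 - fcoeff f 0 1 ≠ 0 := by
    intro h
    apply hlambda n hn
    field_simp
    linear_combination -h
  have hcL : (n : ℂ) * fcoeff g 0 0 - fcoeff f 0 1 ∈ L :=
    sub_mem (mul_mem (natCast_mem L n) (hgL 0 0)) (hfL 0 1)
  have hW : ∀ b : ℕ, coeff b (X * z.derivativeFun) = (b : ℂ) * coeff b z := by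
    intro b
    cases b with
    | zero => simp
    | succ b => rw [coeff_succ_X_mul, show z.derivativeFun = derivative ℂ z from rfl, coeff_derivative]; push_cast; ring
  have hG0 : coeff 0 (subst2 g z) = fcoeff g 0 0 := by
    simp [subst2, coeff_mk]
  -- LHS decomposition
  set A : ℂ := ∑ p ∈ (antidiagonal n).erase (0, n),
      coeff p.1 (subst2 g z) * ((p.2 : ℂ) * coeff p.2 z) with hA_def
  have hmem0n : ((0 : ℕ), n) ∈ antidiagonal n := by simp
  have hL : coeff n (subst2 g z * (X * z.derivativeFun))
      = fcoeff g 0 0 * ((n : ℂ) * coeff n z) + A := by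
    rw [coeff_mul, ← Finset.add_sum_erase _ _ hmem0n]
    congr 1
    · rw [hG0, hW]
    · apply sum_congr rfl
      intro p _
      rw [hW]
  have hA : A ∈ L := by
    apply sum_mem
    rintro ⟨a, b⟩ hab
    rw [mem_erase, HasAntidiagonal.mem_antidiagonal] at hab
    obtain ⟨hne, habn⟩ := hab
    rcases Nat.eq_zero_or_pos b with rfl | hb
    · simp only [Nat.cast_zero, zero_mul, mul_zero]
      exact zero_mem L
    have hbn : b < n := by
      rcases Nat.lt_or_ge b n with h | h
      · exact h
      · exfalso; apply hne; have : b = n := by omega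
        simp_all
    have han : a < n := by omega
    exact mul_mem (bb_subst2_coeff_mem L g hgL z hz n ih a han)
      (mul_mem (natCast_mem L b) (ih b hbn))
  -- RHS decomposition
  set B : ℂ := ∑ i ∈ range (n + 1), ∑ j ∈ range (n + 1),
      fcoeff f i j * (if (i, j) = ((0 : ℕ), (1 : ℕ)) then 0
        else coeff n (X ^ i * z ^ j)) with hB_def
  have hR : coeff n (subst2 f z) = fcoeff f 0 1 * coeff n z + B := by
    rw [subst2, coeff_mk]
    have split : ∀ i j : ℕ, fcoeff f i j * coeff n (X ^ i * z ^ j)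
        = fcoeff f i j * (if (i, j) = ((0 : ℕ), (1 : ℕ)) then 0
            else coeff n (X ^ i * z ^ j))
          + (if (i, j) = ((0 : ℕ), (1 : ℕ)) then fcoeff f 0 1 * coeff n z else 0) := by
      intro i j
      by_cases h : (i, j) = ((0 : ℕ), (1 : ℕ))
      · obtain ⟨h1, h2⟩ := Prod.mk.injEq .. ▸ h
        subst h1; subst h2
        simp
      · simp [h]
    simp_rw [split, Finset.sum_add_distrib]
    rw [add_comm, hB_def]
    congr 1
    rw [← Finset.sum_product']
    rw [Finset.sum_ite_eq' ((range (n + 1)) ×ˢ (range (n + 1))) ((0 : ℕ), (1 : ℕ))]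
    simp [hn]
  have hB : B ∈ L := by
    apply sum_mem; intro i _
    apply sum_mem; intro j _
    apply mul_mem (hfL i j)
    split
    · exact zero_mem L
    · rename_i h
      apply bb_xpow_coeff_mem L z hz n ih i j n le_rfl
      rintro ⟨-, rfl, rfl⟩
      exact h rfl
  have hEq := congrArg (coeff n) heq
  rw [hL, hR] at hEq
  have hkey : ((n : ℂ) * fcoeff g 0 0 - fcoeff f 0 1) * coeff n z = B - A := by
    linear_combination hEq
  have hrw : coeff n z
      = (((n : ℂ) * fcoeff g 0 0 - fcoeff f 0 1) * coeff n z)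
        / ((n : ℂ) * fcoeff g 0 0 - fcoeff f 0 1) := by
    field_simp
  rw [hrw, hkey]
  exact div_mem (sub_mem hB hA) hcL
end

section
/- Let f, g ∈ ℂ[[t,z]] with g(0,0) ≠ 0 and f(0,0) = 0, and suppose λ := (∂f/∂z)(0,0)/g(0,0) is a positive integer. Let Σ be the set of z ∈ ℂ[[t]] with zero constant term satisfying g(t, z(t))·t·z'(t) = f(t, z(t)). Then: (i) any two elements z1, z2 ∈ Σ have coeff_i(z1) = coeff_i(z2) for all 1 ≤ i ≤ λ−1; (ii) if z1, z2 ∈ Σ and coeff_λ(z1) = coeff_λ(z2), then z1 = z2; (iii) if Σ is nonempty, then for every ζ ∈ ℂ there is exactly one z ∈ Σ with coeff_λ(z) = ζ. -/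
open PowerSeries

lemma bb_pow_agree {z₁ z₂ : PowerSeries ℂ} {m : ℕ}
    (h : ∀ i ≤ m, coeff i z₁ = coeff i z₂) (j : ℕ) :
    ∀ k ≤ m, coeff k (z₁ ^ j) = coeff k (z₂ ^ j) := by
  induction j with
  | zero => intro k hk; rfl
  | succ j ih =>
    intro k hk
    rw [pow_succ, pow_succ, coeff_mul, coeff_mul]
    refine Finset.sum_congr rfl fun pq hpq => ?_
    rw [Finset.HasAntidiagonal.mem_antidiagonal] at hpq
    rw [ih pq.1 (by omega), h pq.2 (by omega)]

lemma bb_pow_agree_lt {z₁ z₂ : PowerSeries ℂ} {n : ℕ}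
    (h0₁ : constantCoeff z₁ = 0) (h0₂ : constantCoeff z₂ = 0)
    (h : ∀ i < n, coeff i z₁ = coeff i z₂) {j : ℕ} (hj : 2 ≤ j) :
    coeff n (z₁ ^ j) = coeff n (z₂ ^ j) := by
  obtain ⟨j', rfl⟩ : ∃ j', j = j' + 1 := ⟨j - 1, by omega⟩
  rw [pow_succ, pow_succ, coeff_mul, coeff_mul]
  refine Finset.sum_congr rfl fun pq hpq => ?_
  rw [Finset.HasAntidiagonal.mem_antidiagonal] at hpq
  rcases Nat.eq_zero_or_pos pq.2 with h2 | h2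
  · rw [h2, coeff_zero_eq_constantCoeff, h0₁, h0₂]; ring
  rcases Nat.eq_zero_or_pos pq.1 with h1 | h1
  · have e1 : coeff pq.1 (z₁ ^ j') = 0 := by
      rw [h1, coeff_zero_eq_constantCoeff, map_pow, h0₁, zero_pow (by omega)]
    have e2 : coeff pq.1 (z₂ ^ j') = 0 := by
      rw [h1, coeff_zero_eq_constantCoeff, map_pow, h0₂, zero_pow (by omega)]
    rw [e1, e2]; ring
  · rw [bb_pow_agree (fun i hi => h i (by omega)) j' pq.1 le_rfl, h pq.2 (by omega)]

lemma bb_subst2_agree (f : MvPowerSeries (Fin 2) ℂ) {z₁ z₂ : PowerSeries ℂ} {m : ℕ}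
    (hag : ∀ i ≤ m, coeff i z₁ = coeff i z₂) {k : ℕ} (hk : k ≤ m) :
    coeff k (subst2 f z₁) = coeff k (subst2 f z₂) := by
  simp only [subst2, coeff_mk]
  refine Finset.sum_congr rfl fun i hi => Finset.sum_congr rfl fun j hj => ?_
  rw [coeff_X_pow_mul', coeff_X_pow_mul']
  congr 1
  split_ifs with hik
  · exact bb_pow_agree (fun a ha => hag a (ha.trans ((Nat.sub_le k i).trans hk))) j _ le_rfl
  · rfl

lemma bb_constantCoeff_subst2 (f : MvPowerSeries (Fin 2) ℂ) (z : PowerSeries ℂ) :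
    coeff 0 (subst2 f z) = fcoeff f 0 0 := by
  simp [subst2, coeff_mk]

noncomputable def bbErr (f g : MvPowerSeries (Fin 2) ℂ) (z : PowerSeries ℂ) : PowerSeries ℂ :=
  subst2 g z * (PowerSeries.X * z.derivativeFun) - subst2 f z

lemma bbErr_eq_zero_iff (f g : MvPowerSeries (Fin 2) ℂ) (z : PowerSeries ℂ) :
    bbErr f g z = 0 ↔ subst2 g z * (PowerSeries.X * z.derivativeFun) = subst2 f z :=
  sub_eq_zero
lemma bb_coeff_derivativeFun (f : PowerSeries ℂ) (n : ℕ) :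
    coeff n f.derivativeFun = coeff (n + 1) f * (n + 1) :=
  coeff_derivative f n
lemma bb_key (f g : MvPowerSeries (Fin 2) ℂ) (n : ℕ) (z₁ z₂ : PowerSeries ℂ)
    (h0₁ : constantCoeff z₁ = 0) (h0₂ : constantCoeff z₂ = 0)
    (hag : ∀ i < n, coeff i z₁ = coeff i z₂) :
    coeff n (bbErr f g z₁) - coeff n (bbErr f g z₂)
      = ((n : ℂ) * fcoeff g 0 0 - fcoeff f 0 1) * (coeff n z₁ - coeff n z₂) := by
  rcases Nat.eq_zero_or_pos n with rfl | hn
  · have hd : coeff 0 z₁ - coeff 0 z₂ = 0 := by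
      simp [coeff_zero_eq_constantCoeff, h0₁, h0₂]
    have e : ∀ z : PowerSeries ℂ, constantCoeff z = 0 →
        coeff 0 (bbErr f g z) = - fcoeff f 0 0 := by
      intro z hz
      simp only [bbErr, map_sub, bb_constantCoeff_subst2]
      have h1 : coeff 0 (subst2 g z * (PowerSeries.X * z.derivativeFun)) = 0 := by
        simp [coeff_zero_eq_constantCoeff]
      rw [h1, zero_sub]
    rw [e z₁ h0₁, e z₂ h0₂, hd, mul_zero, sub_self]
  -- main case n ≥ 1
  have hfside : coeff n (subst2 f z₁) - coeff n (subst2 f z₂)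
      = fcoeff f 0 1 * (coeff n z₁ - coeff n z₂) := by
    simp only [subst2, coeff_mk]
    rw [← Finset.sum_sub_distrib]
    refine (Finset.sum_eq_single_of_mem 0 (Finset.mem_range.mpr (by omega)) ?_).trans ?_
    · intro i hi hine
      rw [← Finset.sum_sub_distrib]
      refine Finset.sum_eq_zero fun j hj => ?_
      rw [Finset.mem_range] at hi
      rw [coeff_X_pow_mul', coeff_X_pow_mul', if_pos (by omega), if_pos (by omega),
        bb_pow_agree (fun a ha => hag a (by omega)) j (n - i) le_rfl, sub_self]
    · rw [← Finset.sum_sub_distrib]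
      refine (Finset.sum_eq_single_of_mem 1 (Finset.mem_range.mpr (by omega)) ?_).trans ?_
      · intro j hj hjne
        rcases Nat.eq_zero_or_pos j with rfl | hjpos
        · simp
        · have hj2 : 2 ≤ j := by omega
          rw [pow_zero, one_mul, one_mul, bb_pow_agree_lt h0₁ h0₂ hag hj2, sub_self]
      · rw [pow_zero, one_mul, one_mul, pow_one, pow_one, mul_sub]
  have hgside : coeff n (subst2 g z₁ * (PowerSeries.X * z₁.derivativeFun))
      - coeff n (subst2 g z₂ * (PowerSeries.X * z₂.derivativeFun))
      = (n : ℂ) * fcoeff g 0 0 * (coeff n z₁ - coeff n z₂) := by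
    rw [coeff_mul, coeff_mul, ← Finset.sum_sub_distrib]
    refine (Finset.sum_eq_single_of_mem (0, n)
      (Finset.HasAntidiagonal.mem_antidiagonal.mpr (by omega)) ?_).trans ?_
    · intro pq hpq hne
      rw [Finset.HasAntidiagonal.mem_antidiagonal] at hpq
      rcases Nat.eq_zero_or_pos pq.2 with h2 | h2
      · rw [h2]; simp [coeff_zero_eq_constantCoeff]
      · have hq : pq.2 < n := by
          rcases Nat.lt_or_ge pq.2 n with h | h
          · exact h
          · exfalso; exact hne (Prod.ext (by omega) (by omega))
        obtain ⟨q, hq2⟩ : ∃ q, pq.2 = q + 1 := ⟨pq.2 - 1, by omega⟩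
        rw [hq2, coeff_succ_X_mul, coeff_succ_X_mul, bb_coeff_derivativeFun,
          bb_coeff_derivativeFun, hag (q + 1) (by omega),
          bb_subst2_agree g (fun a ha => hag a (by omega)) (le_refl pq.1), sub_self]
    · obtain ⟨m, rfl⟩ : ∃ m, n = m + 1 := ⟨n - 1, by omega⟩
      rw [coeff_succ_X_mul, coeff_succ_X_mul, bb_coeff_derivativeFun, bb_coeff_derivativeFun,
        show ((0 : ℕ), m + 1).1 = 0 from rfl, bb_constantCoeff_subst2, bb_constantCoeff_subst2]
      push_cast
      ring
  simp only [bbErr, map_sub]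
  linear_combination hgside - hfside
noncomputable def bbC (f g : MvPowerSeries (Fin 2) ℂ) (lam : ℕ) (z₀ : PowerSeries ℂ)
    (ζ : ℂ) (n : ℕ) : ℂ :=
  if n < lam then PowerSeries.coeff n z₀
  else if n = lam then ζ
  else - PowerSeries.coeff n
      (bbErr f g (PowerSeries.mk fun i => if h : i < n then bbC f g lam z₀ ζ i else 0)) /
      (((n : ℂ) - (lam : ℂ)) * fcoeff g 0 0)
termination_by n
decreasing_by exact h

lemma bbC_lt (f g : MvPowerSeries (Fin 2) ℂ) (lam : ℕ) (z₀ : PowerSeries ℂ) (ζ : ℂ)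
    {n : ℕ} (h : n < lam) : bbC f g lam z₀ ζ n = PowerSeries.coeff n z₀ := by
  rw [bbC, if_pos h]

lemma bbC_lam (f g : MvPowerSeries (Fin 2) ℂ) (lam : ℕ) (z₀ : PowerSeries ℂ) (ζ : ℂ)
    (h : 1 ≤ lam) : bbC f g lam z₀ ζ lam = ζ := by
  rw [bbC, if_neg (lt_irrefl lam), if_pos rfl]

lemma bbC_gt (f g : MvPowerSeries (Fin 2) ℂ) (lam : ℕ) (z₀ : PowerSeries ℂ) (ζ : ℂ)
    {n : ℕ} (h : lam < n) : bbC f g lam z₀ ζ n = - PowerSeries.coeff n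
      (bbErr f g (PowerSeries.mk fun i => if h : i < n then bbC f g lam z₀ ζ i else 0)) /
      (((n : ℂ) - (lam : ℂ)) * fcoeff g 0 0) := by
  rw [bbC, if_neg (by omega), if_neg (by omega)]

/-- Briot–Bouquet, resonant case: suppose `g(0,0) ≠ 0`, `f(0,0) = 0` and
`λ = f_{0,1}/g_{0,0}` is a positive integer. Consider solutions `z` with zero
constant term of `g(t, z(t)) · t · z'(t) = f(t, z(t))`. Then (i) any two solutions
agree in all coefficients of index `< λ`; (ii) two solutions agreeing in the
coefficient of index `λ` are equal; (iii) if a solution exists, then for every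
`ζ ∈ ℂ` there is exactly one solution whose `λ`-th coefficient is `ζ`. -/
theorem briot_bouquet_resonant_case
    (f g : MvPowerSeries (Fin 2) ℂ)
    (hg : fcoeff g 0 0 ≠ 0) (hf : fcoeff f 0 0 = 0)
    (lam : ℕ) (hlam : 1 ≤ lam)
    (hlambda : fcoeff f 0 1 / fcoeff g 0 0 = (lam : ℂ)) :
    (∀ z₁ z₂ : PowerSeries ℂ,
      PowerSeries.constantCoeff z₁ = 0 →
        subst2 g z₁ * (PowerSeries.X * z₁.derivativeFun) = subst2 f z₁ →
      PowerSeries.constantCoeff z₂ = 0 →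
        subst2 g z₂ * (PowerSeries.X * z₂.derivativeFun) = subst2 f z₂ →
      ∀ i : ℕ, i < lam → PowerSeries.coeff i z₁ = PowerSeries.coeff i z₂) ∧
    (∀ z₁ z₂ : PowerSeries ℂ,
      PowerSeries.constantCoeff z₁ = 0 →
        subst2 g z₁ * (PowerSeries.X * z₁.derivativeFun) = subst2 f z₁ →
      PowerSeries.constantCoeff z₂ = 0 →
        subst2 g z₂ * (PowerSeries.X * z₂.derivativeFun) = subst2 f z₂ →
      PowerSeries.coeff lam z₁ = PowerSeries.coeff lam z₂ → z₁ = z₂) ∧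
    ((∃ z : PowerSeries ℂ, PowerSeries.constantCoeff z = 0 ∧
        subst2 g z * (PowerSeries.X * z.derivativeFun) = subst2 f z) →
      ∀ ζ : ℂ, ∃! z : PowerSeries ℂ, (PowerSeries.constantCoeff z = 0 ∧
        subst2 g z * (PowerSeries.X * z.derivativeFun) = subst2 f z) ∧
        PowerSeries.coeff lam z = ζ) := by
  have hf01 : fcoeff f 0 1 = (lam : ℂ) * fcoeff g 0 0 := by
    field_simp at hlambda
    linear_combination hlambda
  have hslope : ∀ n : ℕ, n ≠ lam → ((n : ℂ) * fcoeff g 0 0 - fcoeff f 0 1) ≠ 0 := by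
    intro n hn
    rw [hf01]
    have h1 : (n : ℂ) ≠ (lam : ℂ) := by exact_mod_cast hn
    have h2 := mul_ne_zero (sub_ne_zero.mpr h1) hg
    intro hc; apply h2; linear_combination hc
  -- key coefficient relation for two solutions
  have key0 : ∀ z₁ z₂ : PowerSeries ℂ, constantCoeff z₁ = 0 →
      subst2 g z₁ * (PowerSeries.X * z₁.derivativeFun) = subst2 f z₁ →
      constantCoeff z₂ = 0 →
      subst2 g z₂ * (PowerSeries.X * z₂.derivativeFun) = subst2 f z₂ →
      ∀ n : ℕ, (∀ i < n, coeff i z₁ = coeff i z₂) →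
      ((n : ℂ) * fcoeff g 0 0 - fcoeff f 0 1) * (coeff n z₁ - coeff n z₂) = 0 := by
    intro z₁ z₂ h01 he1 h02 he2 n h
    have hk := bb_key f g n z₁ z₂ h01 h02 h
    rw [(bbErr_eq_zero_iff f g z₁).mpr he1, (bbErr_eq_zero_iff f g z₂).mpr he2] at hk
    simpa using hk.symm
  have part1 : ∀ z₁ z₂ : PowerSeries ℂ, constantCoeff z₁ = 0 →
      subst2 g z₁ * (PowerSeries.X * z₁.derivativeFun) = subst2 f z₁ →
      constantCoeff z₂ = 0 →
      subst2 g z₂ * (PowerSeries.X * z₂.derivativeFun) = subst2 f z₂ →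
      ∀ i : ℕ, i < lam → coeff i z₁ = coeff i z₂ := by
    intro z₁ z₂ h01 he1 h02 he2 i
    induction i using Nat.strong_induction_on with
    | _ i ih =>
      intro hi
      have h := key0 z₁ z₂ h01 he1 h02 he2 i (fun a ha => ih a ha (ha.trans hi))
      have := hslope i hi.ne
      have hd := (mul_eq_zero.mp h).resolve_left this
      exact sub_eq_zero.mp hd
  have part2 : ∀ z₁ z₂ : PowerSeries ℂ, constantCoeff z₁ = 0 →
      subst2 g z₁ * (PowerSeries.X * z₁.derivativeFun) = subst2 f z₁ →
      constantCoeff z₂ = 0 →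
      subst2 g z₂ * (PowerSeries.X * z₂.derivativeFun) = subst2 f z₂ →
      coeff lam z₁ = coeff lam z₂ → z₁ = z₂ := by
    intro z₁ z₂ h01 he1 h02 he2 hl
    ext n
    induction n using Nat.strong_induction_on with
    | _ n ih =>
      rcases eq_or_ne n lam with rfl | hn
      · exact hl
      · have h := key0 z₁ z₂ h01 he1 h02 he2 n ih
        have hd := (mul_eq_zero.mp h).resolve_left (hslope n hn)
        exact sub_eq_zero.mp hd
  refine ⟨part1, part2, ?_⟩
  rintro ⟨z₀, hz00, hz0e⟩ ζ
  set z : PowerSeries ℂ := PowerSeries.mk (bbC f g lam z₀ ζ) with hz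
  have hzc : ∀ n, coeff n z = bbC f g lam z₀ ζ n := fun n => coeff_mk n _
  have hz0 : constantCoeff z = 0 := by
    rw [← coeff_zero_eq_constantCoeff_apply, hzc, bbC_lt f g lam z₀ ζ (by omega),
      coeff_zero_eq_constantCoeff_apply, hz00]
  have hE0 : bbErr f g z₀ = 0 := (bbErr_eq_zero_iff f g z₀).mpr hz0e
  have hsol : ∀ n, coeff n (bbErr f g z) = 0 := by
    intro n
    rcases lt_trichotomy n lam with h | h | h
    · have hk := bb_key f g n z z₀ hz0 hz00
        (fun i hi => by rw [hzc, bbC_lt f g lam z₀ ζ (hi.trans h)])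
      rw [hE0] at hk
      simp only [map_zero, sub_zero] at hk
      rw [hk, hzc, bbC_lt f g lam z₀ ζ h, sub_self, mul_zero]
    · have hk := bb_key f g n z z₀ hz0 hz00
        (fun i hi => by rw [hzc, bbC_lt f g lam z₀ ζ (h ▸ hi)])
      rw [hE0] at hk
      simp only [map_zero, sub_zero] at hk
      rw [hk, h, hf01, sub_self, zero_mul]
    · set w : PowerSeries ℂ :=
        PowerSeries.mk (fun i => if hi : i < n then bbC f g lam z₀ ζ i else 0) with hw
      have hwc : ∀ i, coeff i w = if hi : i < n then bbC f g lam z₀ ζ i else 0 :=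
        fun i => coeff_mk i _
      have hw0 : constantCoeff w = 0 := by
        rw [← coeff_zero_eq_constantCoeff_apply, hwc, dif_pos (by omega),
          bbC_lt f g lam z₀ ζ (by omega), coeff_zero_eq_constantCoeff_apply, hz00]
      have hk := bb_key f g n z w hz0 hw0
        (fun i hi => by rw [hzc, hwc, dif_pos hi])
      have hwn : coeff n w = 0 := by rw [hwc, dif_neg (lt_irrefl n)]
      have hzn : coeff n z = - coeff n (bbErr f g w) /
          (((n : ℂ) - (lam : ℂ)) * fcoeff g 0 0) := by
        rw [hzc, bbC_gt f g lam z₀ ζ h, hw]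
      have hs : ((n : ℂ) - (lam : ℂ)) * fcoeff g 0 0 ≠ 0 :=
        mul_ne_zero (sub_ne_zero.mpr (by exact_mod_cast h.ne')) hg
      rw [hzn, hwn] at hk
      have hcancel : (((n : ℂ) - (lam : ℂ)) * fcoeff g 0 0) *
          (- coeff n (bbErr f g w) / (((n : ℂ) - (lam : ℂ)) * fcoeff g 0 0))
          = - coeff n (bbErr f g w) := by rw [mul_div_assoc']; exact mul_div_cancel_left₀ _ hs
      rw [hf01] at hk
      linear_combination hk + hcancel
  have hEz : bbErr f g z = 0 := by
    ext n
    rw [hsol n, map_zero]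
  have heq : subst2 g z * (PowerSeries.X * z.derivativeFun) = subst2 f z :=
    (bbErr_eq_zero_iff f g z).mp hEz
  have hzlam : coeff lam z = ζ := by rw [hzc, bbC_lam f g lam z₀ ζ hlam]
  refine ⟨z, ⟨⟨hz0, heq⟩, hzlam⟩, ?_⟩
  rintro y ⟨⟨hy0, hye⟩, hylam⟩
  exact part2 y z hy0 hye hz0 heq (by rw [hylam, hzlam])
end

section
/- Let f, g ∈ ℂ[[t,z]] with g(0,0) ≠ 0 and f(0,0) = 0, and assume f and g are convergent, i.e., there exists r > 0 such that Σ_{i,j} |f_{i,j}|·r^{i+j} < ∞ and Σ_{i,j} |g_{i,j}|·r^{i+j} < ∞. Then every z ∈ ℂ[[t]] with zero constant term satisfying g(t, z(t))·t·z'(t) = f(t, z(t)) is convergent, i.e., has positive radius of convergence. -/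
set_option maxHeartbeats 1000000


namespace BBaux
open PowerSeries Finset


noncomputable def v (n : ℕ) : ℝ := (((n : ℝ) + 1) ^ 2)⁻¹

noncomputable def w (n : ℕ) : ℝ := if n = 0 then 0 else v n

lemma v_pos (n : ℕ) : 0 < v n := by unfold v; positivity

lemma w_nonneg (n : ℕ) : 0 ≤ w n := by
  unfold w; split
  · exact le_refl 0
  · exact (v_pos _).le

lemma w_zero : w 0 = 0 := rfl

lemma w_le_v (n : ℕ) : w n ≤ v n := by
  unfold w; split
  · exact (v_pos _).le
  · exact le_refl _

lemma w_le_one (n : ℕ) : w n ≤ 1 := by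
  refine (w_le_v n).trans ?_
  unfold v
  rw [inv_le_one_iff₀]
  right
  nlinarith [Nat.cast_nonneg (α := ℝ) n]

lemma sum_v_le (N : ℕ) : ∑ k ∈ range N, v k ≤ 2 - 2 / ((N : ℝ) + 1) := by
  induction N with
  | zero => simp
  | succ N ih =>
      rw [Finset.sum_range_succ]
      have h1 : (0:ℝ) < (N:ℝ) + 1 := by positivity
      have h2 : (0:ℝ) < (N:ℝ) + 2 := by positivity
      have key : v N ≤ 2 / ((N:ℝ)+1) - 2 / ((N:ℝ)+2) := by
        unfold v
        rw [div_sub_div _ _ (ne_of_gt h1) (ne_of_gt h2), inv_eq_one_div,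
          div_le_div_iff₀ (by positivity) (by positivity)]
        nlinarith
      have h3 : (N:ℝ) + 1 + 1 = (N:ℝ) + 2 := by ring
      push_cast
      rw [h3]
      linarith

lemma sum_v_le' (N : ℕ) : ∑ k ∈ range N, v k ≤ 2 := by
  refine (sum_v_le N).trans ?_
  have h : 0 ≤ 2 / ((N:ℝ)+1) := by positivity
  linarith

lemma frac_aux (A B C : ℝ) (hA : 0 < A) (hB : 0 < B) (hC : 0 < C) (h : C ≤ 2*(A+B)) :
    A⁻¹ * B⁻¹ ≤ 2 * C⁻¹ * (A⁻¹ + B⁻¹) := by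
  have expand : 2*C⁻¹*(A⁻¹+B⁻¹) - A⁻¹*B⁻¹ = (2*(A+B) - C)/(C*A*B) := by
    field_simp
    ring
  have h2 : 0 ≤ (2*(A+B) - C)/(C*A*B) := div_nonneg (by linarith) (by positivity)
  linarith [expand ▸ h2]

lemma v_mul_v (k n : ℕ) (hk : k ≤ n) :
    v k * v (n - k) ≤ 2 * v n * (v k + v (n - k)) := by
  have hab : ((n - k : ℕ) : ℝ) = (n : ℝ) - (k : ℝ) := by
    push_cast [Nat.cast_sub hk]; ring
  have key : ((n:ℝ) + 1)^2 ≤ 2 * (((k:ℝ)+1)^2 + (((n-k:ℕ):ℝ)+1)^2) := by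
    rw [hab]; nlinarith [sq_nonneg ((k:ℝ) - ((n:ℝ) - (k:ℝ)))]
  exact frac_aux _ _ _ (by positivity) (by positivity) (by positivity) key

lemma conv_w (n : ℕ) : ∑ k ∈ range (n+1), w k * w (n-k) ≤ 8 * w n := by
  rcases Nat.eq_zero_or_pos n with rfl | hn
  · simp [w_zero]
  have hwn : w n = v n := by unfold w; rw [if_neg (Nat.pos_iff_ne_zero.mp hn)]
  calc ∑ k ∈ range (n+1), w k * w (n-k)
      ≤ ∑ k ∈ range (n+1), 2 * v n * (v k + v (n-k)) := by
        refine Finset.sum_le_sum fun k hk => ?_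
        have hk' : k ≤ n := Nat.lt_succ_iff.mp (Finset.mem_range.mp hk)
        calc w k * w (n-k) ≤ v k * v (n-k) :=
              mul_le_mul (w_le_v k) (w_le_v _) (w_nonneg _) (v_pos k).le
          _ ≤ 2 * v n * (v k + v (n-k)) := v_mul_v k n hk'
    _ = 2 * v n * (∑ k ∈ range (n+1), v k + ∑ k ∈ range (n+1), v (n-k)) := by
        rw [← Finset.sum_add_distrib, Finset.mul_sum]
    _ ≤ 2 * v n * (2 + 2) := by
        have h1 := sum_v_le' (n+1)
        have h2 : ∑ k ∈ range (n+1), v (n-k) = ∑ k ∈ range (n+1), v k := by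
          rw [← Finset.sum_range_reflect (fun k => v k) (n+1)]
          refine Finset.sum_congr rfl fun k hk => ?_
          have : n + 1 - 1 - k = n - k := by omega
          rw [this]
        rw [h2]
        have := (v_pos n).le
        nlinarith
    _ = 8 * w n := by rw [hwn]; ring

lemma sq_le_pow4 (i : ℕ) : ((i:ℝ)+1)^2 ≤ 2 * 4 ^ i := by
  induction i with
  | zero => norm_num
  | succ i ih =>
      have h0 : (0:ℝ) ≤ (i:ℝ) := Nat.cast_nonneg i
      push_cast
      calc ((i:ℝ)+1+1)^2 ≤ 4 * ((i:ℝ)+1)^2 := by nlinarith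
        _ ≤ 4 * (2 * 4 ^ i) := by nlinarith
        _ = 2 * 4 ^ (i+1) := by ring

lemma w_shift (m i : ℕ) (hi : i ≤ m) : w (m - i) ≤ 2 * 4 ^ i * w m := by
  rcases Nat.lt_or_ge i m with him | him
  swap
  · have h0 : m - i = 0 := Nat.sub_eq_zero_of_le him
    rw [h0, w_zero]
    have := w_nonneg m
    positivity
  · have hm : m ≠ 0 := by omega
    have hmi : m - i ≠ 0 := by omega
    unfold w
    rw [if_neg hm, if_neg hmi]
    unfold v
    have hkey : ((m:ℝ)+1) ≤ ((i:ℝ)+1) * (((m-i:ℕ):ℝ)+1) := by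
      have h : (m + 1 : ℕ) ≤ (i+1) * ((m-i) + 1) := by
        have h := Nat.sub_add_cancel (le_of_lt him)
        nlinarith [Nat.zero_le (i * (m - i))]
      exact_mod_cast h
    have h2 : ((m:ℝ)+1)^2 ≤ 2 * 4^i * (((m-i:ℕ):ℝ)+1)^2 := by
      have hsq := sq_le_pow4 i
      have h0 : (0:ℝ) ≤ ((m:ℝ)+1) := by positivity
      calc ((m:ℝ)+1)^2 ≤ (((i:ℝ)+1) * (((m-i:ℕ):ℝ)+1))^2 :=
            pow_le_pow_left₀ h0 hkey 2
        _ = ((i:ℝ)+1)^2 * (((m-i:ℕ):ℝ)+1)^2 := by ring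
        _ ≤ 2 * 4^i * (((m-i:ℕ):ℝ)+1)^2 := by nlinarith [sq_nonneg (((m-i:ℕ):ℝ)+1)]
    rw [inv_eq_one_div, inv_eq_one_div, mul_one_div, div_le_div_iff₀ (by positivity) (by positivity)]
    linarith

lemma geom_le (q : ℝ) (h0 : 0 ≤ q) (h2 : q ≤ 1/2) (N : ℕ) : ∑ i ∈ range N, q ^ i ≤ 2 := by
  have h1 : q < 1 := by linarith
  calc ∑ i ∈ range N, q ^ i ≤ ∑' i : ℕ, q ^ i :=
        Summable.sum_le_tsum (range N) (fun i _ => pow_nonneg h0 i) (summable_geometric_of_lt_one h0 h1)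
    _ = (1 - q)⁻¹ := tsum_geometric_of_lt_one h0 h1
    _ ≤ 2 := by
        rw [inv_le_comm₀ (by linarith) (by norm_num)]
        linarith


lemma coeff_zero_pow_eq_zero {z : PowerSeries ℂ} (hz : PowerSeries.constantCoeff z = 0)
    {j : ℕ} (hj : 1 ≤ j) : PowerSeries.coeff 0 (z ^ j) = 0 := by
  rw [PowerSeries.coeff_zero_eq_constantCoeff, map_pow, hz, zero_pow (by omega)]

lemma zpow_bound (z : PowerSeries ℂ) (hz0 : PowerSeries.constantCoeff z = 0)
    (ε R : ℝ) (hε : 0 ≤ ε) (hR : 0 ≤ R) (n : ℕ)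
    (IH : ∀ k, k < n → ‖PowerSeries.coeff k z‖ ≤ ε * (w k * R ^ k)) :
    ∀ j : ℕ, ∀ m, m ≤ n → (1 ≤ j ∨ m < n) →
      ‖PowerSeries.coeff m (z ^ (j+1))‖ ≤ ε ^ (j+1) * 8 ^ j * (w m * R ^ m) := by
  intro j
  induction j with
  | zero =>
      intro m hm hcond
      have hmn : m < n := by rcases hcond with h | h; · omega
                             · exact h
      simpa using IH m hmn
  | succ j ihj =>
      intro m hm _
      have key : ‖PowerSeries.coeff m (z ^ (j+2))‖ ≤
          ∑ p ∈ antidiagonal m,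
            (ε ^ (j+1) * 8 ^ j * (w p.1 * R ^ p.1)) * (ε * (w p.2 * R ^ p.2)) := by
        rw [show z ^ (j+2) = z ^ (j+1) * z from pow_succ z (j+1), PowerSeries.coeff_mul]
        refine (norm_sum_le _ _).trans (Finset.sum_le_sum fun p hp => ?_)
        rw [Finset.HasAntidiagonal.mem_antidiagonal] at hp
        rcases Nat.eq_zero_or_pos p.1 with h1 | h1
        · rw [norm_mul, h1, coeff_zero_pow_eq_zero hz0 (by omega), norm_zero, zero_mul]
          exact mul_nonneg (mul_nonneg (by positivity) (mul_nonneg (w_nonneg _) (by positivity)))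
            (mul_nonneg hε (mul_nonneg (w_nonneg _) (by positivity)))
        rcases Nat.eq_zero_or_pos p.2 with h2 | h2
        · rw [norm_mul, h2, PowerSeries.coeff_zero_eq_constantCoeff, hz0, norm_zero, mul_zero]
          exact mul_nonneg (mul_nonneg (by positivity) (mul_nonneg (w_nonneg _) (by positivity)))
            (mul_nonneg hε (mul_nonneg (w_nonneg _) (by positivity)))
        have hp1 : p.1 < n := by omega
        have hp2 : p.2 < n := by omega
        rw [norm_mul]
        exact mul_le_mul (ihj p.1 (by omega) (Or.inr hp1)) (IH p.2 hp2) (norm_nonneg _)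
          (mul_nonneg (by positivity) (mul_nonneg (w_nonneg _) (by positivity)))
      refine key.trans ?_
      rw [Finset.Nat.sum_antidiagonal_eq_sum_range_succ_mk]
      have hcong : ∀ k ∈ range (m+1),
          (ε ^ (j+1) * 8 ^ j * (w k * R ^ k)) * (ε * (w (m-k) * R ^ (m-k)))
          = (ε ^ (j+2) * 8 ^ j * R ^ m) * (w k * w (m-k)) := by
        intro k hk
        have hk' : k ≤ m := Nat.lt_succ_iff.mp (Finset.mem_range.mp hk)
        have hRk : R ^ k * R ^ (m-k) = R ^ m := by
          rw [← pow_add]; congr 1; omega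
        calc (ε ^ (j+1) * 8 ^ j * (w k * R ^ k)) * (ε * (w (m-k) * R ^ (m-k)))
            = (ε ^ (j+1) * ε) * 8 ^ j * (R ^ k * R ^ (m-k)) * (w k * w (m-k)) := by ring
          _ = (ε ^ (j+2) * 8 ^ j * R ^ m) * (w k * w (m-k)) := by
              rw [hRk, ← pow_succ]
        ;
      rw [Finset.sum_congr rfl hcong, ← Finset.mul_sum]
      calc (ε ^ (j+2) * 8 ^ j * R ^ m) * ∑ k ∈ range (m+1), w k * w (m-k)
          ≤ (ε ^ (j+2) * 8 ^ j * R ^ m) * (8 * w m) := by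
            exact mul_le_mul_of_nonneg_left (conv_w m) (by positivity)
        _ = ε ^ (j+2) * 8 ^ (j+1) * (w m * R ^ m) := by ring

lemma pow_bound_aux (M s R : ℝ) (hM : 0 ≤ M) (hs : 0 < s) (hR : 1 ≤ R) (hsR : 8 ≤ s*R)
    (m : ℕ) (hm : 1 ≤ m) : M / s^m ≤ 8*M/(s*R) * (w m * R^m) := by
  obtain ⟨m', rfl⟩ : ∃ m', m = m'+1 := ⟨m-1, by omega⟩
  have hR0 : (0:ℝ) < R := lt_of_lt_of_le one_pos hR
  have hsR0 : (0:ℝ) < s * R := by positivity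
  have hw : w (m'+1) = ((((m'+1:ℕ):ℝ)+1)^2)⁻¹ := by
    unfold w v; rw [if_neg (Nat.succ_ne_zero m')]
  have hkey : (((m'+1:ℕ):ℝ)+1)^2 ≤ 8 * (s*R)^m' := by
    calc (((m'+1:ℕ):ℝ)+1)^2 ≤ 2 * 4^(m'+1) := sq_le_pow4 (m'+1)
      _ = 8 * 4^m' := by ring
      _ ≤ 8 * (s*R)^m' := by
          have : (4:ℝ)^m' ≤ (s*R)^m' := pow_le_pow_left₀ (by norm_num) (by linarith) m'
          linarith
  have hexp : (0:ℝ) < (((m'+1:ℕ):ℝ)+1)^2 := by positivity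
  have goal_eq : 8*M/(s*R) * (w (m'+1) * R^(m'+1))
      = (8*M*(s*R)^m' * ((((m'+1:ℕ):ℝ)+1)^2)⁻¹) / s^(m'+1) := by
    rw [hw]
    field_simp
    ring
  have h4 : M ≤ 8*M*(s*R)^m' * ((((m'+1:ℕ):ℝ)+1)^2)⁻¹ := by
    have h3 : M * ((((m'+1:ℕ):ℝ)+1)^2) ≤ M * (8 * (s*R)^m') :=
      mul_le_mul_of_nonneg_left hkey hM
    rw [← div_eq_mul_inv, le_div_iff₀ hexp]
    linarith
  rw [goal_eq]
  gcongr


lemma shift_bound (s R : ℝ) (hs : 0 < s) (hR0 : 0 < R) (n i : ℕ) (hi : i ≤ n) :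
    (1/s)^i * (w (n-i) * R^(n-i)) ≤ 2*(4/(s*R))^i * (w n * R^n) := by
  have hRni : R^(n-i) * R^i = R^n := by rw [← pow_add]; congr 1; omega
  have h1 : (1/s)^i * (w (n-i) * R^(n-i)) ≤ (1/s)^i * ((2*4^i*w n) * R^(n-i)) := by
    have := w_shift n i hi
    have h2 : w (n-i) * R^(n-i) ≤ (2*4^i*w n) * R^(n-i) :=
      mul_le_mul_of_nonneg_right this (by positivity)
    exact mul_le_mul_of_nonneg_left h2 (by positivity)
  refine h1.trans (le_of_eq ?_)
  have key : (4/(s*R))^i * R^n = 4^i * (1/s)^i * R^(n-i) := by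
    rw [div_pow, mul_pow, ← hRni, one_div, inv_pow]
    field_simp
  calc (1/s)^i * ((2*4^i*w n) * R^(n-i))
      = 2 * (4^i * (1/s)^i * R^(n-i)) * w n := by ring
    _ = 2 * ((4/(s*R))^i * R^n) * w n := by rw [key]
    _ = 2*(4/(s*R))^i * (w n * R^n) := by ring

lemma geom_tail (q : ℝ) (h0 : 0 ≤ q) (h2 : q ≤ 1/2) (N : ℕ) :
    ∑ i ∈ Ico 1 N, q ^ i ≤ 2 * q := by
  rcases Nat.eq_zero_or_pos N with rfl | hN
  · simp [Finset.Ico_eq_empty_of_le]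
    positivity
  rw [Finset.sum_Ico_eq_sum_range]
  calc ∑ i ∈ range (N-1), q^(1+i) = q * ∑ i ∈ range (N-1), q^i := by
        rw [Finset.mul_sum]
        exact Finset.sum_congr rfl fun i _ => by rw [pow_add, pow_one]
    _ ≤ q * 2 := mul_le_mul_of_nonneg_left (geom_le q h0 h2 _) h0
    _ = 2 * q := by ring


lemma coeff_subst2 (h : MvPowerSeries (Fin 2) ℂ) (z : PowerSeries ℂ) (n : ℕ) :
    PowerSeries.coeff n (subst2 h z) = ∑ i ∈ range (n+1), ∑ j ∈ range (n+1),
      fcoeff h i j * PowerSeries.coeff n (PowerSeries.X ^ i * z ^ j) := by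
  rw [subst2, PowerSeries.coeff_mk]

lemma subst2_coeff_zero (h : MvPowerSeries (Fin 2) ℂ) (z : PowerSeries ℂ) :
    PowerSeries.coeff 0 (subst2 h z) = fcoeff h 0 0 := by
  rw [coeff_subst2]
  simp

lemma j0_sum (h : MvPowerSeries (Fin 2) ℂ) (z : PowerSeries ℂ) (m : ℕ) :
    ∑ i ∈ range (m+1), fcoeff h i 0 * PowerSeries.coeff m (PowerSeries.X ^ i * z ^ 0)
      = fcoeff h m 0 := by
  rw [Finset.sum_eq_single_of_mem m (Finset.self_mem_range_succ m)]
  · simp [PowerSeries.coeff_X_pow]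
  · intro i _ hne
    rw [pow_zero, mul_one, PowerSeries.coeff_X_pow, if_neg (Ne.symm hne), mul_zero]

lemma coeff_X_mul_deriv (z : PowerSeries ℂ) (l : ℕ) :
    PowerSeries.coeff l (PowerSeries.X * z.derivativeFun)
      = PowerSeries.coeff l z * (l : ℂ) := by
  cases l with
  | zero => simp
  | succ l =>
      rw [PowerSeries.coeff_succ_X_mul]
      show (PowerSeries.coeff l) (PowerSeries.derivative ℂ z) = _
      rw [PowerSeries.coeff_derivativeFun]
      push_cast
      ring

lemma inner_bound (z : PowerSeries ℂ) (s R ε M : ℝ) (hs : 0 < s) (hR0 : 0 < R)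
    (hε : 0 ≤ ε) (hM : 0 ≤ M) (hgeom : 8*(ε/s) ≤ 1/2)
    (n : ℕ)
    (hZ : ∀ j : ℕ, ∀ m, m ≤ n → (1 ≤ j ∨ m < n) →
        ‖PowerSeries.coeff m (z ^ (j+1))‖ ≤ ε ^ (j+1) * 8 ^ j * (w m * R ^ m))
    (h : MvPowerSeries (Fin 2) ℂ)
    (hMh : ∀ i j, ‖fcoeff h i j‖ ≤ M / s^(i+j))
    (m : ℕ) (hm : m ≤ n) (i : ℕ) (hi : i ≤ m) (j1 N : ℕ)
    (hcond : 1 ≤ j1 ∨ m < n) :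
    ‖∑ j ∈ Ico (j1+1) N, fcoeff h i j * PowerSeries.coeff m (PowerSeries.X^i * z^j)‖
      ≤ 2*(4/(s*R))^i * (w m * R^m) * (M * (2 * ((ε/s)^(j1+1) * 8^j1))) := by
  have hgeom0 : (0:ℝ) ≤ 8*(ε/s) := by positivity
  rw [Finset.sum_Ico_eq_sum_range]
  have hterm : ∀ j' ∈ range (N - (j1+1)),
      ‖fcoeff h i (j1+1+j') * PowerSeries.coeff m (PowerSeries.X^i * z^(j1+1+j'))‖
        ≤ (2*(4/(s*R))^i * (w m * R^m)) * ((M * ((ε/s)^(j1+1) * 8^j1)) * (8*(ε/s))^j') := by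
    intro j' _
    have e : j1+1+j' = (j1+j')+1 := by omega
    rw [e, norm_mul]
    have h1 : ‖fcoeff h i ((j1+j')+1)‖ ≤ M / s^(i+((j1+j')+1)) := hMh i _
    have h2 : ‖PowerSeries.coeff m (PowerSeries.X^i * z^((j1+j')+1))‖
        ≤ ε^((j1+j')+1) * 8^(j1+j') * (w (m-i) * R^(m-i)) := by
      rw [PowerSeries.coeff_X_pow_mul', if_pos hi]
      refine hZ (j1+j') (m-i) (le_trans (Nat.sub_le m i) hm) ?_
      rcases hcond with hj | hmn
      · exact Or.inl (by omega)
      · exact Or.inr (lt_of_le_of_lt (Nat.sub_le m i) hmn)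
    calc ‖fcoeff h i ((j1+j')+1)‖ * ‖PowerSeries.coeff m (PowerSeries.X^i * z^((j1+j')+1))‖
        ≤ (M / s^(i+((j1+j')+1))) * (ε^((j1+j')+1) * 8^(j1+j') * (w (m-i) * R^(m-i))) := by
          exact mul_le_mul h1 h2 (norm_nonneg _)
            (by positivity)
      _ = (M * ((ε/s)^(j1+1) * 8^j1 * (8*(ε/s))^j')) * ((1/s)^i * (w (m-i) * R^(m-i))) := by
          rw [div_pow, div_pow, mul_pow, div_pow, one_pow]
          field_simp
          ring
      _ ≤ (M * ((ε/s)^(j1+1) * 8^j1 * (8*(ε/s))^j')) * (2*(4/(s*R))^i * (w m * R^m)) := by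
          refine mul_le_mul_of_nonneg_left (shift_bound s R hs hR0 m i hi) (by positivity)
      _ = (2*(4/(s*R))^i * (w m * R^m)) * ((M * ((ε/s)^(j1+1) * 8^j1)) * (8*(ε/s))^j') := by
          ring
  calc ‖∑ j' ∈ range (N - (j1+1)),
        fcoeff h i (j1+1+j') * PowerSeries.coeff m (PowerSeries.X^i * z^(j1+1+j'))‖
      ≤ ∑ j' ∈ range (N - (j1+1)),
        (2*(4/(s*R))^i * (w m * R^m)) * ((M * ((ε/s)^(j1+1) * 8^j1)) * (8*(ε/s))^j') :=
        (norm_sum_le _ _).trans (Finset.sum_le_sum hterm)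
    _ = ((2*(4/(s*R))^i * (w m * R^m)) * (M * ((ε/s)^(j1+1) * 8^j1)))
          * ∑ j' ∈ range (N - (j1+1)), (8*(ε/s))^j' := by
        rw [Finset.mul_sum]
        exact Finset.sum_congr rfl fun j' _ => by ring
    _ ≤ ((2*(4/(s*R))^i * (w m * R^m)) * (M * ((ε/s)^(j1+1) * 8^j1))) * 2 := by
        refine mul_le_mul_of_nonneg_left (geom_le _ hgeom0 hgeom _) ?_
        have := w_nonneg m
        positivity
    _ = 2*(4/(s*R))^i * (w m * R^m) * (M * (2 * ((ε/s)^(j1+1) * 8^j1))) := by ring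

end BBaux

/-- Briot–Bouquet, convergence: if `f` and `g` are convergent two-variable power
series with `g(0,0) ≠ 0` and `f(0,0) = 0`, then every formal power series solution
`z` with zero constant term of `g(t, z(t)) · t · z'(t) = f(t, z(t))` is convergent. -/
theorem briot_bouquet_convergence
    (f g : MvPowerSeries (Fin 2) ℂ)
    (hg : fcoeff g 0 0 ≠ 0) (hf : fcoeff f 0 0 = 0)
    (hconv : ∃ r : ℝ, 0 < r ∧
      Summable (fun p : ℕ × ℕ => ‖fcoeff f p.1 p.2‖ * r ^ (p.1 + p.2)) ∧
      Summable (fun p : ℕ × ℕ => ‖fcoeff g p.1 p.2‖ * r ^ (p.1 + p.2))) :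
    ∀ z : PowerSeries ℂ, PowerSeries.constantCoeff z = 0 →
      subst2 g z * (PowerSeries.X * z.derivativeFun) = subst2 f z →
      ∃ r : ℝ, 0 < r ∧ Summable fun n : ℕ => ‖PowerSeries.coeff n z‖ * r ^ n := by
  intro z hz0 heq
  classical
  obtain ⟨s, hs, hfsum, hgsum⟩ := hconv
  obtain ⟨M, hM, hMf, hMg⟩ : ∃ M : ℝ, 0 < M ∧ (∀ i j : ℕ, ‖fcoeff f i j‖ ≤ M / s ^ (i + j))
      ∧ (∀ i j : ℕ, ‖fcoeff g i j‖ ≤ M / s ^ (i + j)) := by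
    have htf : (0:ℝ) ≤ ∑' p : ℕ × ℕ, ‖fcoeff f p.1 p.2‖ * s ^ (p.1 + p.2) :=
      tsum_nonneg fun p => by positivity
    have hmx := le_max_left (∑' p : ℕ × ℕ, ‖fcoeff f p.1 p.2‖ * s ^ (p.1 + p.2))
      (∑' p : ℕ × ℕ, ‖fcoeff g p.1 p.2‖ * s ^ (p.1 + p.2))
    have hmx' := le_max_right (∑' p : ℕ × ℕ, ‖fcoeff f p.1 p.2‖ * s ^ (p.1 + p.2))
      (∑' p : ℕ × ℕ, ‖fcoeff g p.1 p.2‖ * s ^ (p.1 + p.2))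
    refine ⟨max (∑' p : ℕ × ℕ, ‖fcoeff f p.1 p.2‖ * s ^ (p.1 + p.2))
      (∑' p : ℕ × ℕ, ‖fcoeff g p.1 p.2‖ * s ^ (p.1 + p.2)) + 1, by linarith, ?_, ?_⟩
    · intro i j
      rw [le_div_iff₀ (by positivity)]
      have h1 : ‖fcoeff f i j‖ * s ^ (i + j)
          ≤ ∑' p : ℕ × ℕ, ‖fcoeff f p.1 p.2‖ * s ^ (p.1 + p.2) :=
        Summable.le_tsum hfsum (i, j) fun q _ => by positivity
      linarith
    · intro i j
      rw [le_div_iff₀ (by positivity)]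
      have h1 : ‖fcoeff g i j‖ * s ^ (i + j)
          ≤ ∑' p : ℕ × ℕ, ‖fcoeff g p.1 p.2‖ * s ^ (p.1 + p.2) :=
        Summable.le_tsum hgsum (i, j) fun q _ => by positivity
      linarith
  set c : ℝ := ‖fcoeff g 0 0‖ with hcdef
  have hc : 0 < c := norm_pos_iff.mpr hg
  obtain ⟨ε, hε, hε16, hεquad⟩ : ∃ ε : ℝ, 0 < ε ∧ ε ≤ s / 16
      ∧ (64 * M / s ^ 2 + 64 * M / s) * ε ≤ c / 4 := by
    have hK : (0:ℝ) < 64 * M / s ^ 2 + 64 * M / s := by positivity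
    refine ⟨min (s / 16) (c / (4 * (64 * M / s ^ 2 + 64 * M / s))),
      lt_min (by positivity) (by positivity), min_le_left _ _, ?_⟩
    calc (64 * M / s ^ 2 + 64 * M / s) * min (s / 16) (c / (4 * (64 * M / s ^ 2 + 64 * M / s)))
        ≤ (64 * M / s ^ 2 + 64 * M / s) * (c / (4 * (64 * M / s ^ 2 + 64 * M / s))) :=
          mul_le_mul_of_nonneg_left (min_le_right _ _) hK.le
      _ = c / 4 := by
          field_simp
  have hgeom : 8 * (ε / s) ≤ 1 / 2 := by
    have h1 : ε / s ≤ 1 / 16 := by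
      rw [div_le_div_iff₀ hs (by norm_num)]
      linarith
    linarith
  obtain ⟨N1, hN1pos, hN1⟩ : ∃ N1 : ℕ, 0 < N1
      ∧ ∀ n : ℕ, N1 ≤ n → ‖fcoeff f 0 1‖ ≤ c * (n : ℝ) / 2 := by
    obtain ⟨N0, hN0⟩ := exists_nat_ge (2 * ‖fcoeff f 0 1‖ / c)
    refine ⟨N0 + 1, Nat.succ_pos _, fun n hn => ?_⟩
    have h1 : (N0 : ℝ) ≤ (n : ℝ) := by exact_mod_cast by omega
    rw [div_le_iff₀ hc] at hN0
    rw [le_div_iff₀ (by norm_num : (0:ℝ) < 2)]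
    nlinarith
  obtain ⟨A, hA, hAb⟩ : ∃ A : ℝ, 0 < A ∧ ∀ k, k < N1 → ‖PowerSeries.coeff k z‖ ≤ A := by
    have hs0 : (0:ℝ) ≤ ∑ k ∈ Finset.range N1, ‖PowerSeries.coeff k z‖ :=
      Finset.sum_nonneg fun k _ => norm_nonneg _
    refine ⟨(∑ k ∈ Finset.range N1, ‖PowerSeries.coeff k z‖) + 1, by linarith,
      fun k hk => ?_⟩
    have h1 : ‖PowerSeries.coeff k z‖ ≤ ∑ k ∈ Finset.range N1, ‖PowerSeries.coeff k z‖ :=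
      Finset.single_le_sum (f := fun k => ‖PowerSeries.coeff k z‖)
        (fun k _ => norm_nonneg _) (Finset.mem_range.mpr hk)
    linarith
  obtain ⟨R, hR1, hsR, hRK2, hRA⟩ : ∃ R : ℝ, 1 ≤ R ∧ 8 ≤ s * R
      ∧ (8 * M / s + 16 * M * ε / s ^ 2 + 64 * M * ε / s) / R ≤ c * ε / 4
      ∧ A * ((N1 : ℝ) + 1) ^ 2 ≤ ε * R := by
    have hK2 : (0:ℝ) < 8 * M / s + 16 * M * ε / s ^ 2 + 64 * M * ε / s := by positivity
    refine ⟨max (max (8 / s) 1)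
      (max ((8 * M / s + 16 * M * ε / s ^ 2 + 64 * M * ε / s) / (c * ε / 4))
        (A * ((N1 : ℝ) + 1) ^ 2 / ε)), ?_, ?_, ?_, ?_⟩
    · exact (le_max_right (8 / s) 1).trans (le_max_left _ _)
    · have h : 8 / s ≤ max (max (8 / s) 1)
          (max ((8 * M / s + 16 * M * ε / s ^ 2 + 64 * M * ε / s) / (c * ε / 4))
            (A * ((N1 : ℝ) + 1) ^ 2 / ε)) :=
        (le_max_left (8 / s) 1).trans (le_max_left _ _)
      rw [div_le_iff₀ hs] at h
      nlinarith
    · have hRpos : (0:ℝ) < max (max (8 / s) 1)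
          (max ((8 * M / s + 16 * M * ε / s ^ 2 + 64 * M * ε / s) / (c * ε / 4))
            (A * ((N1 : ℝ) + 1) ^ 2 / ε)) :=
        lt_of_lt_of_le one_pos ((le_max_right (8 / s) 1).trans (le_max_left _ _))
      have h := (le_max_left ((8 * M / s + 16 * M * ε / s ^ 2 + 64 * M * ε / s) / (c * ε / 4))
        (A * ((N1 : ℝ) + 1) ^ 2 / ε)).trans (le_max_right (max (8 / s) 1) _)
      rw [div_le_iff₀ (by positivity : (0:ℝ) < c * ε / 4)] at h
      rw [div_le_iff₀ hRpos]
      nlinarith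
    · have h := (le_max_right ((8 * M / s + 16 * M * ε / s ^ 2 + 64 * M * ε / s) / (c * ε / 4))
        (A * ((N1 : ℝ) + 1) ^ 2 / ε)).trans (le_max_right (max (8 / s) 1) _)
      rw [div_le_iff₀ hε] at h
      nlinarith
  have hR0 : 0 < R := lt_of_lt_of_le one_pos hR1
  have hq0 : (0:ℝ) ≤ 4 / (s * R) := by positivity
  have hq2 : 4 / (s * R) ≤ 1 / 2 := by
    rw [div_le_div_iff₀ (by positivity) (by norm_num)]
    nlinarith
  have hz0c : PowerSeries.coeff 0 z = 0 := by
    rw [PowerSeries.coeff_zero_eq_constantCoeff]; exact hz0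
  -- the main inductive bound
  have main : ∀ n : ℕ, ‖PowerSeries.coeff n z‖ ≤ ε * (BBaux.w n * R ^ n) := by
    intro n
    induction n using Nat.strong_induction_on with
    | _ n IH =>
    rcases Nat.eq_zero_or_pos n with rfl | hn1
    · rw [hz0c, norm_zero]
      simp [BBaux.w_zero]
    rcases Nat.lt_or_ge n N1 with hnN | hnN
    · -- initial segment
      have h1 : ‖PowerSeries.coeff n z‖ ≤ A := hAb n hnN
      have hwn : BBaux.w n = BBaux.v n := by
        unfold BBaux.w; rw [if_neg (by omega)]
      have e1 : (((N1 : ℝ) + 1) ^ 2)⁻¹ ≤ BBaux.w n := by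
        rw [hwn]
        unfold BBaux.v
        have hcast : ((n : ℝ) + 1) ≤ ((N1 : ℝ) + 1) := by
          have : (n : ℝ) ≤ (N1 : ℝ) := by exact_mod_cast hnN.le
          linarith
        refine inv_anti₀ (by positivity) ?_
        nlinarith [Nat.cast_nonneg (α := ℝ) n]
      have e2 : R ≤ R ^ n := by
        calc R = R ^ 1 := (pow_one R).symm
          _ ≤ R ^ n := pow_le_pow_right₀ hR1 (by omega)
      have e3 : A ≤ ε * ((((N1 : ℝ) + 1) ^ 2)⁻¹ * R) := by
        have h5 : A * ((N1 : ℝ) + 1) ^ 2 ≤ R * ε := by nlinarith [hRA]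
        have hp : (0:ℝ) < ((N1 : ℝ) + 1) ^ 2 := by positivity
        calc A = A * (((N1 : ℝ) + 1) ^ 2 * (((N1 : ℝ) + 1) ^ 2)⁻¹) := by
              rw [mul_inv_cancel₀ (ne_of_gt hp), mul_one]
          _ = (A * ((N1 : ℝ) + 1) ^ 2) * (((N1 : ℝ) + 1) ^ 2)⁻¹ := by ring
          _ ≤ (R * ε) * (((N1 : ℝ) + 1) ^ 2)⁻¹ :=
              mul_le_mul_of_nonneg_right h5 (by positivity)
          _ = ε * ((((N1 : ℝ) + 1) ^ 2)⁻¹ * R) := by ring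
      calc ‖PowerSeries.coeff n z‖ ≤ A := h1
        _ ≤ ε * ((((N1 : ℝ) + 1) ^ 2)⁻¹ * R) := e3
        _ ≤ ε * (BBaux.w n * R ^ n) := by
            refine mul_le_mul_of_nonneg_left ?_ hε.le
            exact mul_le_mul e1 e2 hR0.le (BBaux.w_nonneg n)
    · -- main case : N1 ≤ n
      have hZ := BBaux.zpow_bound z hz0 ε R hε.le hR0.le n IH
      -- coefficient identity
      have hL : PowerSeries.coeff n (subst2 g z * (PowerSeries.X * z.derivativeFun))
          = (∑ i ∈ Finset.range n, PowerSeries.coeff (i+1) (subst2 g z)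
              * (PowerSeries.coeff (n-(i+1)) z * ((n-(i+1) : ℕ) : ℂ)))
            + fcoeff g 0 0 * (PowerSeries.coeff n z * (n : ℂ)) := by
        rw [PowerSeries.coeff_mul, Finset.Nat.sum_antidiagonal_eq_sum_range_succ_mk]
        simp only [BBaux.coeff_X_mul_deriv]
        rw [Finset.sum_range_succ']
        simp [BBaux.subst2_coeff_zero]
      have hRHS : PowerSeries.coeff n (subst2 f z)
          = fcoeff f 0 1 * PowerSeries.coeff n z
            + ((∑ i ∈ Finset.range (n+1), fcoeff f i 0
                  * PowerSeries.coeff n (PowerSeries.X ^ i * z ^ 0))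
              + (∑ i ∈ Finset.Ico 1 (n+1), fcoeff f i 1
                  * PowerSeries.coeff n (PowerSeries.X ^ i * z ^ 1))
              + (∑ i ∈ Finset.range (n+1), ∑ j ∈ Finset.Ico 2 (n+1), fcoeff f i j
                  * PowerSeries.coeff n (PowerSeries.X ^ i * z ^ j))) := by
        rw [BBaux.coeff_subst2]
        have hsplit : ∀ i ∈ Finset.range (n+1),
            (∑ j ∈ Finset.range (n+1), fcoeff f i j
              * PowerSeries.coeff n (PowerSeries.X ^ i * z ^ j))
            = fcoeff f i 0 * PowerSeries.coeff n (PowerSeries.X ^ i * z ^ 0)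
              + (fcoeff f i 1 * PowerSeries.coeff n (PowerSeries.X ^ i * z ^ 1)
                + ∑ j ∈ Finset.Ico 2 (n+1), fcoeff f i j
                  * PowerSeries.coeff n (PowerSeries.X ^ i * z ^ j)) := by
          intro i _
          rw [Finset.range_eq_Ico, Finset.sum_eq_sum_Ico_succ_bot (by omega),
            Finset.sum_eq_sum_Ico_succ_bot (by omega)]
        rw [Finset.sum_congr rfl hsplit, Finset.sum_add_distrib, Finset.sum_add_distrib]
        have hpeel : (∑ i ∈ Finset.range (n+1), fcoeff f i 1
              * PowerSeries.coeff n (PowerSeries.X ^ i * z ^ 1))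
            = fcoeff f 0 1 * PowerSeries.coeff n z
              + ∑ i ∈ Finset.Ico 1 (n+1), fcoeff f i 1
                * PowerSeries.coeff n (PowerSeries.X ^ i * z ^ 1) := by
          rw [Finset.range_eq_Ico, Finset.sum_eq_sum_Ico_succ_bot (by omega)]
          rw [pow_zero, pow_one, one_mul]
        rw [hpeel]
        ring
      have hEq := (hL.symm.trans (congrArg (PowerSeries.coeff n) heq)).trans hRHS
      set GGe : ℂ := ∑ i ∈ Finset.range n, PowerSeries.coeff (i+1) (subst2 g z)
        * (PowerSeries.coeff (n-(i+1)) z * ((n-(i+1) : ℕ) : ℂ)) with hGGedef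
      set S0e : ℂ := ∑ i ∈ Finset.range (n+1), fcoeff f i 0
        * PowerSeries.coeff n (PowerSeries.X ^ i * z ^ 0) with hS0edef
      set S1e : ℂ := ∑ i ∈ Finset.Ico 1 (n+1), fcoeff f i 1
        * PowerSeries.coeff n (PowerSeries.X ^ i * z ^ 1) with hS1edef
      set S2e : ℂ := ∑ i ∈ Finset.range (n+1), ∑ j ∈ Finset.Ico 2 (n+1), fcoeff f i j
        * PowerSeries.coeff n (PowerSeries.X ^ i * z ^ j) with hS2edef
      have hiden : fcoeff g 0 0 * (PowerSeries.coeff n z * (n : ℂ))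
          - fcoeff f 0 1 * PowerSeries.coeff n z = (S0e + S1e + S2e) - GGe := by
        linear_combination hEq
      have hWR : (0:ℝ) ≤ BBaux.w n * R ^ n :=
        mul_nonneg (BBaux.w_nonneg n) (by positivity)
      -- bound S0
      have hS0 : ‖S0e‖ ≤ 8 * M / (s * R) * (BBaux.w n * R ^ n) := by
        rw [hS0edef, BBaux.j0_sum]
        have h1 : ‖fcoeff f n 0‖ ≤ M / s ^ n := by simpa using hMf n 0
        exact h1.trans (BBaux.pow_bound_aux M s R hM.le hs hR1 hsR n hn1)
      -- bound S1
      have hS1 : ‖S1e‖ ≤ M * (ε / s) * (16 / (s * R)) * (BBaux.w n * R ^ n) := by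
        rw [hS1edef]
        refine (norm_sum_le _ _).trans ?_
        have hterm : ∀ i ∈ Finset.Ico 1 (n+1),
            ‖fcoeff f i 1 * PowerSeries.coeff n (PowerSeries.X ^ i * z ^ 1)‖
              ≤ (2 * (M * (ε / s)) * (BBaux.w n * R ^ n)) * (4 / (s * R)) ^ i := by
          intro i hi
          obtain ⟨hi1, hi2⟩ := Finset.mem_Ico.mp hi
          have hin : i ≤ n := by omega
          rw [norm_mul, pow_one, PowerSeries.coeff_X_pow_mul', if_pos hin]
          have h1 : ‖fcoeff f i 1‖ ≤ M / s ^ (i + 1) := hMf i 1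
          have h2 : ‖PowerSeries.coeff (n - i) z‖
              ≤ ε * (BBaux.w (n - i) * R ^ (n - i)) := IH (n - i) (by omega)
          calc ‖fcoeff f i 1‖ * ‖PowerSeries.coeff (n - i) z‖
              ≤ (M / s ^ (i + 1)) * (ε * (BBaux.w (n - i) * R ^ (n - i))) :=
                mul_le_mul h1 h2 (norm_nonneg _) (by positivity)
            _ = (M * (ε / s)) * ((1 / s) ^ i * (BBaux.w (n - i) * R ^ (n - i))) := by
                rw [pow_add, pow_one, div_pow, one_pow]
                field_simp
            _ ≤ (M * (ε / s)) * (2 * (4 / (s * R)) ^ i * (BBaux.w n * R ^ n)) :=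
                mul_le_mul_of_nonneg_left (BBaux.shift_bound s R hs hR0 n i hin)
                  (by positivity)
            _ = (2 * (M * (ε / s)) * (BBaux.w n * R ^ n)) * (4 / (s * R)) ^ i := by ring
        calc ∑ i ∈ Finset.Ico 1 (n+1),
              ‖fcoeff f i 1 * PowerSeries.coeff n (PowerSeries.X ^ i * z ^ 1)‖
            ≤ ∑ i ∈ Finset.Ico 1 (n+1),
              (2 * (M * (ε / s)) * (BBaux.w n * R ^ n)) * (4 / (s * R)) ^ i :=
              Finset.sum_le_sum hterm
          _ = (2 * (M * (ε / s)) * (BBaux.w n * R ^ n))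
                * ∑ i ∈ Finset.Ico 1 (n+1), (4 / (s * R)) ^ i := by
              rw [Finset.mul_sum]
          _ ≤ (2 * (M * (ε / s)) * (BBaux.w n * R ^ n)) * (2 * (4 / (s * R))) := by
              refine mul_le_mul_of_nonneg_left (BBaux.geom_tail _ hq0 hq2 _) ?_
              exact mul_nonneg (by positivity) hWR
          _ = M * (ε / s) * (16 / (s * R)) * (BBaux.w n * R ^ n) := by ring
      -- bound S2
      have hS2 : ‖S2e‖ ≤ 64 * M * (ε / s) ^ 2 * (BBaux.w n * R ^ n) := by
        rw [hS2edef]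
        refine (norm_sum_le _ _).trans ?_
        have hinner : ∀ i ∈ Finset.range (n+1),
            ‖∑ j ∈ Finset.Ico 2 (n+1), fcoeff f i j
              * PowerSeries.coeff n (PowerSeries.X ^ i * z ^ j)‖
            ≤ (2 * (BBaux.w n * R ^ n) * (M * (2 * ((ε / s) ^ 2 * 8)))) * (4 / (s * R)) ^ i := by
          intro i hi
          have hin : i ≤ n := by
            have := Finset.mem_range.mp hi; omega
          have h := BBaux.inner_bound z s R ε M hs hR0 hε.le hM.le hgeom n hZ f hMf n
            le_rfl i hin 1 (n+1) (Or.inl le_rfl)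
          calc ‖∑ j ∈ Finset.Ico 2 (n+1), fcoeff f i j
                * PowerSeries.coeff n (PowerSeries.X ^ i * z ^ j)‖
              ≤ 2 * (4 / (s * R)) ^ i * (BBaux.w n * R ^ n)
                  * (M * (2 * ((ε / s) ^ (1+1) * 8 ^ 1))) := by
                exact h
            _ = (2 * (BBaux.w n * R ^ n) * (M * (2 * ((ε / s) ^ 2 * 8)))) * (4 / (s * R)) ^ i := by
                ring
        calc ∑ i ∈ Finset.range (n+1), ‖∑ j ∈ Finset.Ico 2 (n+1), fcoeff f i j
                * PowerSeries.coeff n (PowerSeries.X ^ i * z ^ j)‖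
            ≤ ∑ i ∈ Finset.range (n+1),
              (2 * (BBaux.w n * R ^ n) * (M * (2 * ((ε / s) ^ 2 * 8)))) * (4 / (s * R)) ^ i :=
              Finset.sum_le_sum hinner
          _ = (2 * (BBaux.w n * R ^ n) * (M * (2 * ((ε / s) ^ 2 * 8))))
                * ∑ i ∈ Finset.range (n+1), (4 / (s * R)) ^ i := by rw [Finset.mul_sum]
          _ ≤ (2 * (BBaux.w n * R ^ n) * (M * (2 * ((ε / s) ^ 2 * 8)))) * 2 := by
              refine mul_le_mul_of_nonneg_left (BBaux.geom_le _ hq0 hq2 _) ?_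
              exact mul_nonneg (mul_nonneg (by positivity) hWR) (by positivity)
          _ = 64 * M * (ε / s) ^ 2 * (BBaux.w n * R ^ n) := by ring
      -- bound on the coefficients of subst2 g z
      have hGm : ∀ m : ℕ, 1 ≤ m → m < n → ‖PowerSeries.coeff m (subst2 g z)‖
          ≤ (8 * M / (s * R) + 8 * M * (ε / s)) * (BBaux.w m * R ^ m) := by
        intro m hm1 hmn
        have hWRm : (0:ℝ) ≤ BBaux.w m * R ^ m :=
          mul_nonneg (BBaux.w_nonneg m) (by positivity)
        rw [BBaux.coeff_subst2]
        have hsplitg : ∀ i ∈ Finset.range (m+1),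
            (∑ j ∈ Finset.range (m+1), fcoeff g i j
              * PowerSeries.coeff m (PowerSeries.X ^ i * z ^ j))
            = fcoeff g i 0 * PowerSeries.coeff m (PowerSeries.X ^ i * z ^ 0)
              + ∑ j ∈ Finset.Ico 1 (m+1), fcoeff g i j
                * PowerSeries.coeff m (PowerSeries.X ^ i * z ^ j) := by
          intro i _
          rw [Finset.range_eq_Ico, Finset.sum_eq_sum_Ico_succ_bot (by omega)]
        rw [Finset.sum_congr rfl hsplitg, Finset.sum_add_distrib, BBaux.j0_sum]
        refine (norm_add_le _ _).trans ?_
        have hg0 : ‖fcoeff g m 0‖ ≤ 8 * M / (s * R) * (BBaux.w m * R ^ m) := by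
          have h1 : ‖fcoeff g m 0‖ ≤ M / s ^ m := by simpa using hMg m 0
          exact h1.trans (BBaux.pow_bound_aux M s R hM.le hs hR1 hsR m hm1)
        have hrest : ‖∑ i ∈ Finset.range (m+1), ∑ j ∈ Finset.Ico 1 (m+1), fcoeff g i j
              * PowerSeries.coeff m (PowerSeries.X ^ i * z ^ j)‖
            ≤ 8 * M * (ε / s) * (BBaux.w m * R ^ m) := by
          refine (norm_sum_le _ _).trans ?_
          have hinner : ∀ i ∈ Finset.range (m+1),
              ‖∑ j ∈ Finset.Ico 1 (m+1), fcoeff g i j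
                * PowerSeries.coeff m (PowerSeries.X ^ i * z ^ j)‖
              ≤ (2 * (BBaux.w m * R ^ m) * (M * (2 * (ε / s)))) * (4 / (s * R)) ^ i := by
            intro i hi
            have him : i ≤ m := by
              have := Finset.mem_range.mp hi; omega
            have h := BBaux.inner_bound z s R ε M hs hR0 hε.le hM.le hgeom n hZ g hMg m
              (by omega) i him 0 (m+1) (Or.inr hmn)
            calc ‖∑ j ∈ Finset.Ico 1 (m+1), fcoeff g i j
                  * PowerSeries.coeff m (PowerSeries.X ^ i * z ^ j)‖
                ≤ 2 * (4 / (s * R)) ^ i * (BBaux.w m * R ^ m)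
                    * (M * (2 * ((ε / s) ^ (0+1) * 8 ^ 0))) := by
                  exact h
              _ = (2 * (BBaux.w m * R ^ m) * (M * (2 * (ε / s)))) * (4 / (s * R)) ^ i := by
                  ring
          calc ∑ i ∈ Finset.range (m+1), ‖∑ j ∈ Finset.Ico 1 (m+1), fcoeff g i j
                  * PowerSeries.coeff m (PowerSeries.X ^ i * z ^ j)‖
              ≤ ∑ i ∈ Finset.range (m+1),
                (2 * (BBaux.w m * R ^ m) * (M * (2 * (ε / s)))) * (4 / (s * R)) ^ i :=
                Finset.sum_le_sum hinner
            _ = (2 * (BBaux.w m * R ^ m) * (M * (2 * (ε / s))))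
                  * ∑ i ∈ Finset.range (m+1), (4 / (s * R)) ^ i := by rw [Finset.mul_sum]
            _ ≤ (2 * (BBaux.w m * R ^ m) * (M * (2 * (ε / s)))) * 2 := by
                refine mul_le_mul_of_nonneg_left (BBaux.geom_le _ hq0 hq2 _) ?_
                exact mul_nonneg (mul_nonneg (by positivity) hWRm) (by positivity)
            _ = 8 * M * (ε / s) * (BBaux.w m * R ^ m) := by ring
        calc ‖fcoeff g m 0‖ + ‖∑ i ∈ Finset.range (m+1), ∑ j ∈ Finset.Ico 1 (m+1), fcoeff g i j
              * PowerSeries.coeff m (PowerSeries.X ^ i * z ^ j)‖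
            ≤ 8 * M / (s * R) * (BBaux.w m * R ^ m) + 8 * M * (ε / s) * (BBaux.w m * R ^ m) :=
              add_le_add hg0 hrest
          _ = (8 * M / (s * R) + 8 * M * (ε / s)) * (BBaux.w m * R ^ m) := by ring
      -- bound GG
      have hGG : ‖GGe‖ ≤ (n : ℝ) * (8 * ((8 * M / (s * R) + 8 * M * (ε / s)) * ε))
          * (BBaux.w n * R ^ n) := by
        rw [hGGedef]
        refine (norm_sum_le _ _).trans ?_
        have hterm : ∀ i ∈ Finset.range n,
            ‖PowerSeries.coeff (i+1) (subst2 g z)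
              * (PowerSeries.coeff (n-(i+1)) z * ((n-(i+1) : ℕ) : ℂ))‖
            ≤ ((n : ℝ) * ((8 * M / (s * R) + 8 * M * (ε / s)) * ε) * R ^ n)
              * (BBaux.w (i+1) * BBaux.w (n-(i+1))) := by
          intro i hi
          have hi' : i < n := Finset.mem_range.mp hi
          rcases Nat.lt_or_ge (i+1) n with hlt | hge
          · have h1 := hGm (i+1) (by omega) hlt
            have h2 : ‖PowerSeries.coeff (n-(i+1)) z‖
                ≤ ε * (BBaux.w (n-(i+1)) * R ^ (n-(i+1))) := IH _ (by omega)
            have h3 : ‖((n-(i+1) : ℕ) : ℂ)‖ ≤ (n : ℝ) := by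
              rw [Complex.norm_natCast]
              exact_mod_cast Nat.cast_le.mpr (Nat.sub_le n (i+1))
            have hRsplit : R ^ (i+1) * R ^ (n-(i+1)) = R ^ n := by
              rw [← pow_add]; congr 1; omega
            rw [norm_mul, norm_mul]
            calc ‖PowerSeries.coeff (i+1) (subst2 g z)‖
                  * (‖PowerSeries.coeff (n-(i+1)) z‖ * ‖((n-(i+1) : ℕ) : ℂ)‖)
                ≤ ((8 * M / (s * R) + 8 * M * (ε / s)) * (BBaux.w (i+1) * R ^ (i+1)))
                    * ((ε * (BBaux.w (n-(i+1)) * R ^ (n-(i+1)))) * (n : ℝ)) := by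
                  refine mul_le_mul h1 ?_ (mul_nonneg (norm_nonneg _) (norm_nonneg _)) ?_
                  · refine mul_le_mul h2 h3 (norm_nonneg _) ?_
                    exact mul_nonneg hε.le
                      (mul_nonneg (BBaux.w_nonneg _) (by positivity))
                  · exact mul_nonneg (by positivity)
                      (mul_nonneg (BBaux.w_nonneg _) (by positivity))
              _ = ((n : ℝ) * ((8 * M / (s * R) + 8 * M * (ε / s)) * ε)
                    * (R ^ (i+1) * R ^ (n-(i+1))))
                    * (BBaux.w (i+1) * BBaux.w (n-(i+1))) := by ring
              _ = ((n : ℝ) * ((8 * M / (s * R) + 8 * M * (ε / s)) * ε) * R ^ n)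
                    * (BBaux.w (i+1) * BBaux.w (n-(i+1))) := by rw [hRsplit]
          · have h0 : n - (i+1) = 0 := by omega
            rw [h0]
            simp only [Nat.cast_zero, mul_zero, norm_zero, BBaux.w_zero]
            positivity
        calc ∑ i ∈ Finset.range n, ‖PowerSeries.coeff (i+1) (subst2 g z)
              * (PowerSeries.coeff (n-(i+1)) z * ((n-(i+1) : ℕ) : ℂ))‖
            ≤ ∑ i ∈ Finset.range n, ((n : ℝ) * ((8 * M / (s * R) + 8 * M * (ε / s)) * ε) * R ^ n)
                * (BBaux.w (i+1) * BBaux.w (n-(i+1))) := Finset.sum_le_sum hterm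
          _ = ((n : ℝ) * ((8 * M / (s * R) + 8 * M * (ε / s)) * ε) * R ^ n)
                * ∑ i ∈ Finset.range n, BBaux.w (i+1) * BBaux.w (n-(i+1)) := by
              rw [Finset.mul_sum]
          _ ≤ ((n : ℝ) * ((8 * M / (s * R) + 8 * M * (ε / s)) * ε) * R ^ n) * (8 * BBaux.w n) := by
              refine mul_le_mul_of_nonneg_left ?_ (by positivity)
              have h8 := BBaux.conv_w n
              rw [Finset.sum_range_succ'] at h8
              simpa [BBaux.w_zero] using h8
          _ = (n : ℝ) * (8 * ((8 * M / (s * R) + 8 * M * (ε / s)) * ε))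
                * (BBaux.w n * R ^ n) := by ring
      -- put everything together
      have hlow : c * (n : ℝ) * ‖PowerSeries.coeff n z‖
            - ‖fcoeff f 0 1‖ * ‖PowerSeries.coeff n z‖
          ≤ ‖fcoeff g 0 0 * (PowerSeries.coeff n z * (n : ℂ))
              - fcoeff f 0 1 * PowerSeries.coeff n z‖ := by
        have e1 : ‖fcoeff g 0 0 * (PowerSeries.coeff n z * (n : ℂ))‖
            = c * (n : ℝ) * ‖PowerSeries.coeff n z‖ := by
          rw [norm_mul, norm_mul, Complex.norm_natCast, ← hcdef]
          ring
        have e2 : ‖fcoeff f 0 1 * PowerSeries.coeff n z‖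
            = ‖fcoeff f 0 1‖ * ‖PowerSeries.coeff n z‖ := norm_mul _ _
        rw [← e1, ← e2]
        exact norm_sub_norm_le _ _
      have hup : ‖fcoeff g 0 0 * (PowerSeries.coeff n z * (n : ℂ))
            - fcoeff f 0 1 * PowerSeries.coeff n z‖
          ≤ ‖S0e‖ + ‖S1e‖ + ‖S2e‖ + ‖GGe‖ := by
        rw [hiden]
        calc ‖(S0e + S1e + S2e) - GGe‖ ≤ ‖S0e + S1e + S2e‖ + ‖GGe‖ := norm_sub_le _ _
          _ ≤ (‖S0e‖ + ‖S1e‖ + ‖S2e‖) + ‖GGe‖ := by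
              have := norm_add₃_le (a := S0e) (b := S1e) (c := S2e)
              linarith
      have hfN : ‖fcoeff f 0 1‖ ≤ c * (n : ℝ) / 2 := hN1 n hnN
      have han : (0:ℝ) ≤ ‖PowerSeries.coeff n z‖ := norm_nonneg _
      have h1n : (1:ℝ) ≤ (n : ℝ) := by exact_mod_cast hn1
      have hDf0 : (0:ℝ) ≤ 8 * M / (s * R) + M * (ε / s) * (16 / (s * R))
          + 64 * M * (ε / s) ^ 2 := by positivity
      have hD8 : (0:ℝ) ≤ 8 * ((8 * M / (s * R) + 8 * M * (ε / s)) * ε) := by positivity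
      have hconst : (8 * M / (s * R) + M * (ε / s) * (16 / (s * R)) + 64 * M * (ε / s) ^ 2)
          + 8 * ((8 * M / (s * R) + 8 * M * (ε / s)) * ε) ≤ c * ε / 2 := by
        have hexp : (8 * M / (s * R) + M * (ε / s) * (16 / (s * R)) + 64 * M * (ε / s) ^ 2)
            + 8 * ((8 * M / (s * R) + 8 * M * (ε / s)) * ε)
            = (8 * M / s + 16 * M * ε / s ^ 2 + 64 * M * ε / s) / R
              + (64 * M / s ^ 2 + 64 * M / s) * ε ^ 2 := by
          field_simp
          ring
        have hp2 : (64 * M / s ^ 2 + 64 * M / s) * ε ^ 2 ≤ c * ε / 4 := by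
          nlinarith [hεquad, hε.le]
        rw [hexp]
        linarith [hRK2]
      -- final arithmetic
      have hkey : c * (n : ℝ) * ‖PowerSeries.coeff n z‖
          ≤ ‖fcoeff f 0 1‖ * ‖PowerSeries.coeff n z‖
            + (8 * M / (s * R) + M * (ε / s) * (16 / (s * R)) + 64 * M * (ε / s) ^ 2)
              * (BBaux.w n * R ^ n)
            + (n : ℝ) * (8 * ((8 * M / (s * R) + 8 * M * (ε / s)) * ε))
              * (BBaux.w n * R ^ n) := by
        have := hlow.trans hup
        linarith [hS0, hS1, hS2, hGG]
      have hfan : ‖fcoeff f 0 1‖ * ‖PowerSeries.coeff n z‖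
          ≤ c * (n : ℝ) / 2 * ‖PowerSeries.coeff n z‖ :=
        mul_le_mul_of_nonneg_right hfN han
      have hstep : c * (n : ℝ) / 2 * ‖PowerSeries.coeff n z‖
          ≤ ((8 * M / (s * R) + M * (ε / s) * (16 / (s * R)) + 64 * M * (ε / s) ^ 2)
              + (n : ℝ) * (8 * ((8 * M / (s * R) + 8 * M * (ε / s)) * ε)))
            * (BBaux.w n * R ^ n) := by
        nlinarith [hkey, hfan]
      have hstep2 : ((8 * M / (s * R) + M * (ε / s) * (16 / (s * R)) + 64 * M * (ε / s) ^ 2)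
              + (n : ℝ) * (8 * ((8 * M / (s * R) + 8 * M * (ε / s)) * ε)))
            * (BBaux.w n * R ^ n)
          ≤ ((n : ℝ) * (c * ε / 2)) * (BBaux.w n * R ^ n) := by
        refine mul_le_mul_of_nonneg_right ?_ hWR
        nlinarith [hconst, hDf0, hD8, h1n,
          mul_le_mul_of_nonneg_left hconst (by linarith : (0:ℝ) ≤ (n : ℝ)),
          mul_nonneg (by linarith : (0:ℝ) ≤ (n : ℝ) - 1) hDf0]
      have hfin : c * (n : ℝ) / 2 * ‖PowerSeries.coeff n z‖
          ≤ (c * (n : ℝ) / 2) * (ε * (BBaux.w n * R ^ n)) := by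
        have : ((n : ℝ) * (c * ε / 2)) * (BBaux.w n * R ^ n)
            = (c * (n : ℝ) / 2) * (ε * (BBaux.w n * R ^ n)) := by ring
        linarith [hstep.trans hstep2]
      have hpos : (0:ℝ) < c * (n : ℝ) / 2 := by
        have : (0:ℝ) < (n : ℝ) := by linarith
        positivity
      exact (mul_le_mul_iff_of_pos_left hpos).mp hfin
  -- conclude summability
  refine ⟨1 / (2 * R), by positivity, ?_⟩
  refine Summable.of_nonneg_of_le (fun n => by positivity) (fun n => ?_)
    ((summable_geometric_of_lt_one (by norm_num) (by norm_num : (1:ℝ)/2 < 1)).mul_left ε)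
  have hRn : R ^ n * (1 / R) ^ n = 1 := by
    rw [one_div, inv_pow, mul_inv_cancel₀ (by positivity)]
  calc ‖PowerSeries.coeff n z‖ * (1 / (2 * R)) ^ n
      ≤ (ε * (BBaux.w n * R ^ n)) * (1 / (2 * R)) ^ n :=
        mul_le_mul_of_nonneg_right (main n) (by positivity)
    _ = ε * BBaux.w n * ((1:ℝ) / 2) ^ n * (R ^ n * (1 / R) ^ n) := by
        rw [show (1 / (2 * R)) = (1/2) * (1/R) from by field_simp, mul_pow]
        ring
    _ = ε * BBaux.w n * ((1:ℝ) / 2) ^ n := by rw [hRn, mul_one]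
    _ ≤ ε * ((1:ℝ) / 2) ^ n := by
        have h2 : ε * BBaux.w n ≤ ε := by
          nlinarith [BBaux.w_le_one n, BBaux.w_nonneg n, hε.le]
        exact mul_le_mul_of_nonneg_right h2 (by positivity)
end

section
/- Let ν ≥ 1 be an integer and let A, B ∈ ℂ[[u]] be formal power series with ord(A) = ν − 1 and B(0) ≠ 0. Then the set of formal power series s ∈ ℂ[[t]] with ord(s) = 1 satisfying A(s(t))·s'(t) = t^{ν−1}·B(s(t)) has exactly ν elements, and every such s satisfies (coeff_1(s))^ν = B(0)/coeff_{ν−1}(A). -/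
/-- Composition `A(s(t))` of formal power series (intended for `s` with zero
constant term, in which case `coeff n (s^k) = 0` for `k > n`). -/
noncomputable def pscomp (A s : PowerSeries ℂ) : PowerSeries ℂ :=
  PowerSeries.mk fun n => ∑ k ∈ Finset.range (n + 1),
    (PowerSeries.coeff k A) * PowerSeries.coeff n (s ^ k)


open PowerSeries Finset

lemma roots_ncard (ν : ℕ) (hν : 1 ≤ ν) (r : ℂ) (hr : r ≠ 0) :
    {c : ℂ | c ^ ν = r}.ncard = ν := by
  obtain ⟨α, hα⟩ := IsAlgClosed.exists_pow_nat_eq r hν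
  have hα0 : α ≠ 0 := by
    rintro rfl; exact hr (by simpa [zero_pow (by omega : ν ≠ 0)] using hα.symm)
  have hζ := Complex.isPrimitiveRoot_exp ν (by omega)
  set ζ := Complex.exp (2 * Real.pi * Complex.I / ν)
  have : NeZero ν := ⟨by omega⟩
  have hset : {c : ℂ | c ^ ν = r} = (fun i => ζ ^ i * α) '' (Finset.range ν : Set ℕ) := by
    ext c
    simp only [Set.mem_setOf_eq, Set.mem_image, Finset.mem_coe, Finset.mem_range]
    constructor
    · intro hc
      have : (c / α) ^ ν = 1 := by
        rw [div_pow, hc, ← hα, div_self (pow_ne_zero _ hα0)]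
      obtain ⟨i, hi, hie⟩ := hζ.eq_pow_of_pow_eq_one this
      exact ⟨i, hi, by rw [hie]; field_simp⟩
    · rintro ⟨i, hi, rfl⟩
      rw [mul_pow, ← pow_mul, mul_comm i ν, pow_mul, hζ.pow_eq_one, one_pow, one_mul, hα]
  rw [hset, Set.ncard_image_of_injOn (hζ.injOn_pow_mul hα0), Set.ncard_coe_finset,
    Finset.card_range]

lemma coeff_pscomp (A s : PowerSeries ℂ) (n : ℕ) :
    PowerSeries.coeff n (pscomp A s) =
      ∑ k ∈ Finset.range (n + 1), (PowerSeries.coeff k A) * PowerSeries.coeff n (s ^ k) := by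
  simp [pscomp]

lemma coeff_derivativeFun_eq (f : PowerSeries ℂ) (n : ℕ) :
    PowerSeries.coeff n f.derivativeFun = PowerSeries.coeff (n + 1) f * (n + 1) :=
  PowerSeries.coeff_derivative f n

lemma pow_coeff_lt {s : PowerSeries ℂ} (hs0 : PowerSeries.coeff 0 s = 0)
    {m k : ℕ} (h : m < k) : PowerSeries.coeff m (s ^ k) = 0 := by
  have hX : (X : PowerSeries ℂ) ∣ s := by
    rw [PowerSeries.X_dvd_iff, ← PowerSeries.coeff_zero_eq_constantCoeff_apply]; exact hs0
  have : (X : PowerSeries ℂ) ^ k ∣ s ^ k := pow_dvd_pow_of_dvd hX k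
  exact (PowerSeries.X_pow_dvd_iff.mp this) m h

lemma pow_coeff_diag {s : PowerSeries ℂ} (hs0 : PowerSeries.coeff 0 s = 0) (k : ℕ) :
    PowerSeries.coeff k (s ^ k) = (PowerSeries.coeff 1 s) ^ k := by
  induction k with
  | zero => simp
  | succ k ih =>
    rw [pow_succ', PowerSeries.coeff_mul]
    rw [Finset.sum_eq_single (1, k)]
    · rw [ih, pow_succ']
    · rintro ⟨i, j⟩ hmem hne
      rw [Finset.HasAntidiagonal.mem_antidiagonal] at hmem
      rcases Nat.lt_or_ge i 1 with hi | hi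
      · interval_cases i
        · rw [hs0, zero_mul]
      · rcases Nat.lt_or_ge j k with hj | hj
        · rw [pow_coeff_lt hs0 hj, mul_zero]
        · exfalso; apply hne; simp only [Prod.mk.injEq]; omega
    · intro hmem
      exfalso; exact hmem (Finset.HasAntidiagonal.mem_antidiagonal.mpr (by omega))

lemma key_diff {s t : PowerSeries ℂ} (hs0 : PowerSeries.coeff 0 s = 0)
    (ht0 : PowerSeries.coeff 0 t = 0) {n : ℕ} (hn : 1 ≤ n)
    (hag : ∀ i ≤ n, PowerSeries.coeff i s = PowerSeries.coeff i t) :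
    ∀ k m, m ≤ n + k →
      PowerSeries.coeff m (s ^ k) - PowerSeries.coeff m (t ^ k) =
        if m = n + k then
          (k : ℂ) * (PowerSeries.coeff 1 s) ^ (k - 1) *
            (PowerSeries.coeff (n+1) s - PowerSeries.coeff (n+1) t)
        else 0 := by
  set c := PowerSeries.coeff 1 s with hc
  set δ := PowerSeries.coeff (n+1) s - PowerSeries.coeff (n+1) t with hδ
  have htc : PowerSeries.coeff 1 t = c := (hag 1 hn).symm
  intro k
  induction k with
  | zero => intro m hm; simp
  | succ k ih =>
    intro m hm
    have expand : PowerSeries.coeff m (s ^ (k+1)) - PowerSeries.coeff m (t ^ (k+1)) =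
        ∑ p ∈ Finset.HasAntidiagonal.antidiagonal m,
          (PowerSeries.coeff p.1 s * PowerSeries.coeff p.2 (s ^ k) -
           PowerSeries.coeff p.1 t * PowerSeries.coeff p.2 (t ^ k)) := by
      rw [pow_succ', pow_succ', PowerSeries.coeff_mul, PowerSeries.coeff_mul,
        ← Finset.sum_sub_distrib]
    by_cases hm1 : m = n + k + 1
    · have per : ∀ p ∈ Finset.HasAntidiagonal.antidiagonal m,
          (PowerSeries.coeff p.1 s * PowerSeries.coeff p.2 (s ^ k) -
           PowerSeries.coeff p.1 t * PowerSeries.coeff p.2 (t ^ k)) =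
          (if p = (1, n+k) then c * ((k:ℂ) * c^(k-1) * δ) else 0) +
          (if p = (n+1, k) then δ * c^k else 0) := by
        rintro ⟨i, j⟩ hmem
        rw [Finset.HasAntidiagonal.mem_antidiagonal] at hmem
        dsimp only
        rcases Nat.lt_or_ge i 1 with hi0 | hi1
        · interval_cases i
          rw [hs0, ht0, if_neg (by simp), if_neg (by simp only [Prod.mk.injEq]; omega)]
          ring
        · rcases eq_or_lt_of_le hi1 with hi1e | hi2
          · -- i = 1, j = n + k
            have hj : j = n + k := by omega
            subst hj; rw [← hi1e]
            rw [if_pos rfl, if_neg (by simp only [Prod.mk.injEq]; omega)]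
            have hd := ih (n+k) le_rfl
            rw [if_pos rfl] at hd
            rw [htc, add_zero, ← hc]
            linear_combination c * hd
          · rcases Nat.lt_or_ge i (n+1) with hin | hin
            · -- 2 ≤ i ≤ n
              have hd := ih j (by omega)
              rw [if_neg (by omega)] at hd
              rw [hag i (by omega), sub_eq_zero.mp hd,
                if_neg (by simp only [Prod.mk.injEq]; omega),
                if_neg (by simp only [Prod.mk.injEq]; omega)]
              ring
            · rcases eq_or_lt_of_le hin with hie | hie
              · -- i = n+1, j = k
                have hj : j = k := by omega
                subst hj; rw [← hie]
                rw [if_neg (by simp only [Prod.mk.injEq]; omega), if_pos rfl,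
                  pow_coeff_diag hs0, pow_coeff_diag ht0, htc, ← hc]
                ring
              · -- i ≥ n+2, j < k
                rw [pow_coeff_lt hs0 (by omega), pow_coeff_lt ht0 (by omega),
                  if_neg (by simp only [Prod.mk.injEq]; omega),
                  if_neg (by simp only [Prod.mk.injEq]; omega)]
                ring
      rw [expand, Finset.sum_congr rfl per, Finset.sum_add_distrib,
        Finset.sum_ite_eq' _ ((1 : ℕ), n+k), Finset.sum_ite_eq' _ (n+1, k),
        if_pos (Finset.HasAntidiagonal.mem_antidiagonal.mpr (by omega)),
        if_pos (Finset.HasAntidiagonal.mem_antidiagonal.mpr (by omega)), if_pos (show m = n + (k+1) by omega)]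
      have hkk : (k:ℂ) * c^(k-1) * c = (k:ℂ) * c^k := by
        rcases k with _ | k
        · simp
        · simp only [Nat.add_sub_cancel, pow_succ]; ring
      simp only [Nat.add_sub_cancel]
      push_cast
      linear_combination δ * hkk
    · rw [if_neg (by omega), expand]
      apply Finset.sum_eq_zero
      rintro ⟨i, j⟩ hmem
      rw [Finset.HasAntidiagonal.mem_antidiagonal] at hmem
      dsimp only
      rcases Nat.lt_or_ge i 1 with hi0 | hi1
      · interval_cases i
        rw [hs0, ht0]; ring
      · rcases Nat.lt_or_ge i (n+1) with hin | hin
        · have hd := ih j (by omega)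
          rw [if_neg (by omega)] at hd
          rw [hag i (by omega), sub_eq_zero.mp hd]; ring
        · rw [pow_coeff_lt hs0 (by omega), pow_coeff_lt ht0 (by omega)]; ring

lemma pscompA_lt {d : ℕ} {A : PowerSeries ℂ} (hA0 : ∀ k < d, PowerSeries.coeff k A = 0)
    (s : PowerSeries ℂ) {i : ℕ} (hi : i < d) : PowerSeries.coeff i (pscomp A s) = 0 := by
  rw [coeff_pscomp]
  exact Finset.sum_eq_zero fun k hk => by
    rw [hA0 k (by rw [Finset.mem_range] at hk; omega), zero_mul]

lemma pscompA_at {d : ℕ} {A : PowerSeries ℂ} (hA0 : ∀ k < d, PowerSeries.coeff k A = 0)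
    {s : PowerSeries ℂ} (hs0 : PowerSeries.coeff 0 s = 0) :
    PowerSeries.coeff d (pscomp A s) =
      PowerSeries.coeff d A * (PowerSeries.coeff 1 s) ^ d := by
  rw [coeff_pscomp, Finset.sum_eq_single d]
  · rw [pow_coeff_diag hs0]
  · intro k hk hne
    rw [Finset.mem_range] at hk
    rcases Nat.lt_or_ge k d with h | h
    · rw [hA0 k h, zero_mul]
    · rw [pow_coeff_lt hs0 (by omega), mul_zero]
  · intro h; exact absurd (Finset.mem_range.mpr (by omega)) h

lemma pscomp_congr (B : PowerSeries ℂ) {s t : PowerSeries ℂ}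
    (hs0 : PowerSeries.coeff 0 s = 0) (ht0 : PowerSeries.coeff 0 t = 0)
    {n : ℕ} (hn : 1 ≤ n)
    (hag : ∀ i ≤ n, PowerSeries.coeff i s = PowerSeries.coeff i t) :
    PowerSeries.coeff n (pscomp B s) = PowerSeries.coeff n (pscomp B t) := by
  rw [coeff_pscomp, coeff_pscomp]
  refine Finset.sum_congr rfl fun k _ => ?_
  have hd := key_diff hs0 ht0 hn hag k n (by omega)
  rcases Nat.eq_zero_or_pos k with rfl | hk
  · rfl
  · rw [if_neg (by omega)] at hd
    rw [sub_eq_zero.mp hd]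

lemma eqdiff {ν : ℕ} (hν : 1 ≤ ν) {A : PowerSeries ℂ}
    (hA0 : ∀ k < ν - 1, PowerSeries.coeff k A = 0)
    {s t : PowerSeries ℂ} (hs0 : PowerSeries.coeff 0 s = 0)
    (ht0 : PowerSeries.coeff 0 t = 0) {n : ℕ} (hn : 1 ≤ n)
    (hag : ∀ i ≤ n, PowerSeries.coeff i s = PowerSeries.coeff i t) :
    PowerSeries.coeff (n + (ν-1)) (pscomp A s * s.derivativeFun) -
      PowerSeries.coeff (n + (ν-1)) (pscomp A t * t.derivativeFun) =
    PowerSeries.coeff (ν-1) A * (PowerSeries.coeff 1 s) ^ (ν-1) * ((n + ν : ℕ) : ℂ) *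
      (PowerSeries.coeff (n+1) s - PowerSeries.coeff (n+1) t) := by
  set d := ν - 1 with hd
  set c := PowerSeries.coeff 1 s with hc
  set δ := PowerSeries.coeff (n+1) s - PowerSeries.coeff (n+1) t with hδ
  set a := PowerSeries.coeff d A with ha
  have htc : PowerSeries.coeff 1 t = c := (hag 1 hn).symm
  have hPA : ∀ i, PowerSeries.coeff i (pscomp A s) - PowerSeries.coeff i (pscomp A t) =
      ∑ k ∈ Finset.range (i+1), PowerSeries.coeff k A *
        (PowerSeries.coeff i (s^k) - PowerSeries.coeff i (t^k)) := by
    intro i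
    rw [coeff_pscomp, coeff_pscomp, ← Finset.sum_sub_distrib]
    exact Finset.sum_congr rfl fun k _ => by ring
  have expand : PowerSeries.coeff (n+d) (pscomp A s * s.derivativeFun) -
      PowerSeries.coeff (n+d) (pscomp A t * t.derivativeFun) =
      ∑ p ∈ Finset.HasAntidiagonal.antidiagonal (n+d),
        (PowerSeries.coeff p.1 (pscomp A s) * PowerSeries.coeff p.2 s.derivativeFun -
         PowerSeries.coeff p.1 (pscomp A t) * PowerSeries.coeff p.2 t.derivativeFun) := by
    rw [PowerSeries.coeff_mul, PowerSeries.coeff_mul, ← Finset.sum_sub_distrib]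
  have per : ∀ p ∈ Finset.HasAntidiagonal.antidiagonal (n+d),
      (PowerSeries.coeff p.1 (pscomp A s) * PowerSeries.coeff p.2 s.derivativeFun -
       PowerSeries.coeff p.1 (pscomp A t) * PowerSeries.coeff p.2 t.derivativeFun) =
      (if p = (n+d, 0) then (d : ℂ) * a * c^d * δ else 0) +
      (if p = (d, n) then a * c^d * ((n:ℂ)+1) * δ else 0) := by
    rintro ⟨i, j⟩ hmem
    rw [Finset.HasAntidiagonal.mem_antidiagonal] at hmem
    dsimp only
    rcases Nat.eq_zero_or_pos j with rfl | hj1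
    · -- j = 0, i = n + d
      have hi : i = n + d := by omega
      subst hi
      rw [if_pos rfl, if_neg (by simp only [Prod.mk.injEq]; omega)]
      rw [coeff_derivativeFun_eq, coeff_derivativeFun_eq, htc, ← hc]
      have hPAd : PowerSeries.coeff (n+d) (pscomp A s) -
          PowerSeries.coeff (n+d) (pscomp A t) = a * ((d : ℂ) * c^(d-1) * δ) := by
        rw [hPA, Finset.sum_eq_single d]
        · rw [key_diff hs0 ht0 hn hag d (n+d) le_rfl, if_pos rfl]
        · intro k hk hne
          rw [Finset.mem_range] at hk
          rcases Nat.lt_or_ge k d with h | h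
          · rw [hA0 k h, zero_mul]
          · rw [key_diff hs0 ht0 hn hag k (n+d) (by omega), if_neg (by omega), mul_zero]
        · intro h; exact absurd (Finset.mem_range.mpr (by omega)) h
      have hdd : (d:ℂ) * c^(d-1) * c = (d:ℂ) * c^d := by
        rcases d with _ | d'
        · simp
        · simp only [Nat.add_sub_cancel, pow_succ]; ring
      push_cast
      linear_combination c * hPAd + a * δ * hdd
    · rcases Nat.lt_or_ge j n with hjn | hjn
      · -- 1 ≤ j ≤ n-1
        have hiq : PowerSeries.coeff i (pscomp A s) = PowerSeries.coeff i (pscomp A t) := by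
          rw [← sub_eq_zero, hPA]
          apply Finset.sum_eq_zero
          intro k hk
          rw [Finset.mem_range] at hk
          rcases Nat.lt_or_ge k d with h | h
          · rw [hA0 k h, zero_mul]
          · rw [key_diff hs0 ht0 hn hag k i (by omega), if_neg (by omega), mul_zero]
        rw [hiq, coeff_derivativeFun_eq, coeff_derivativeFun_eq,
          hag (j+1) (by omega), if_neg (by simp only [Prod.mk.injEq]; omega),
          if_neg (by simp only [Prod.mk.injEq]; omega)]
        ring
      · rcases eq_or_lt_of_le hjn with hje | hjg
        · -- j = n, i = d
          have hi : i = d := by omega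
          subst hi
          rw [if_neg (by simp only [Prod.mk.injEq]; omega), if_pos (by rw [← hje]),
            coeff_derivativeFun_eq, coeff_derivativeFun_eq,
            pscompA_at hA0 hs0, pscompA_at hA0 ht0, htc, ← hc, ← ha, ← hje]
          ring
        · -- j ≥ n+1, i < d
          rw [pscompA_lt hA0 s (by omega), pscompA_lt hA0 t (by omega),
            if_neg (by simp only [Prod.mk.injEq]; omega),
            if_neg (by simp only [Prod.mk.injEq]; omega)]
          ring
  rw [expand, Finset.sum_congr rfl per, Finset.sum_add_distrib,
    Finset.sum_ite_eq' _ ((n+d : ℕ), (0:ℕ)), Finset.sum_ite_eq' _ ((d:ℕ), (n:ℕ)),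
    if_pos (Finset.HasAntidiagonal.mem_antidiagonal.mpr (by omega)),
    if_pos (Finset.HasAntidiagonal.mem_antidiagonal.mpr (by omega))]
  have : ((n + ν : ℕ) : ℂ) = (d : ℂ) + ((n : ℂ) + 1) := by
    rw [hd]; push_cast [Nat.cast_sub hν]; ring
  rw [this]; ring

lemma lhs_low {d : ℕ} {A : PowerSeries ℂ} (hA0 : ∀ k < d, PowerSeries.coeff k A = 0)
    (s : PowerSeries ℂ) {m : ℕ} (hm : m < d) :
    PowerSeries.coeff m (pscomp A s * s.derivativeFun) = 0 := by
  rw [PowerSeries.coeff_mul]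
  apply Finset.sum_eq_zero
  rintro ⟨i, j⟩ hmem
  rw [Finset.HasAntidiagonal.mem_antidiagonal] at hmem
  rw [pscompA_lt hA0 s (by omega : i < d), zero_mul]

lemma lhs_nu {d : ℕ} {A : PowerSeries ℂ} (hA0 : ∀ k < d, PowerSeries.coeff k A = 0)
    {s : PowerSeries ℂ} (hs0 : PowerSeries.coeff 0 s = 0) :
    PowerSeries.coeff d (pscomp A s * s.derivativeFun) =
      PowerSeries.coeff d A * (PowerSeries.coeff 1 s) ^ (d+1) := by
  rw [PowerSeries.coeff_mul, Finset.sum_eq_single (d, 0)]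
  · rw [pscompA_at hA0 hs0, coeff_derivativeFun_eq, pow_succ]
    ring
  · rintro ⟨i, j⟩ hmem hne
    rw [Finset.HasAntidiagonal.mem_antidiagonal] at hmem
    rw [pscompA_lt hA0 s (by simp only [ne_eq, Prod.mk.injEq, not_and] at hne; omega : i < d), zero_mul]
  · intro h; exact absurd (Finset.HasAntidiagonal.mem_antidiagonal.mpr (by omega)) h

lemma rhs_nu (ν : ℕ) (B s : PowerSeries ℂ) :
    PowerSeries.coeff (ν-1) (PowerSeries.X^(ν-1) * pscomp B s) =
      PowerSeries.constantCoeff B := by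
  have := PowerSeries.coeff_X_pow_mul (pscomp B s) (ν-1) 0
  rw [zero_add] at this
  rw [this, coeff_pscomp]
  simp

noncomputable def eqErr (ν : ℕ) (A B x : PowerSeries ℂ) : PowerSeries ℂ :=
  pscomp A x * x.derivativeFun - PowerSeries.X^(ν-1) * pscomp B x

noncomputable def stepc (ν : ℕ) (A B T : PowerSeries ℂ) (n : ℕ) : ℂ :=
  - PowerSeries.coeff (n + (ν-1)) (eqErr ν A B T) /
    (PowerSeries.coeff (ν-1) A * (PowerSeries.coeff 1 T)^(ν-1) * ((n + ν : ℕ) : ℂ))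

noncomputable def Fseq (ν : ℕ) (A B : PowerSeries ℂ) (c : ℂ) : ℕ → PowerSeries ℂ
  | 0 => PowerSeries.C c * PowerSeries.X
  | (n+1) => Fseq ν A B c n +
      PowerSeries.C (stepc ν A B (Fseq ν A B c n) (n+1)) * PowerSeries.X^(n+2)

variable {ν : ℕ} {A B : PowerSeries ℂ} {c : ℂ}

lemma Fseq_zero (n : ℕ) : PowerSeries.coeff 0 (Fseq ν A B c n) = 0 := by
  induction n with
  | zero => simp [Fseq]
  | succ n ih => rw [Fseq, map_add, ih]; simp [PowerSeries.coeff_X_pow]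

lemma Fseq_one (n : ℕ) : PowerSeries.coeff 1 (Fseq ν A B c n) = c := by
  induction n with
  | zero => simp [Fseq]
  | succ n ih => rw [Fseq, map_add, ih]; simp [PowerSeries.coeff_X_pow]

lemma Fseq_high (n : ℕ) : ∀ j, n + 2 ≤ j → PowerSeries.coeff j (Fseq ν A B c n) = 0 := by
  induction n with
  | zero =>
    intro j hj
    simp only [Fseq, PowerSeries.coeff_C_mul, PowerSeries.coeff_X]
    rw [if_neg (by omega), mul_zero]
  | succ n ih =>
    intro j hj
    rw [Fseq, map_add, ih j (by omega)]
    simp only [PowerSeries.coeff_C_mul, PowerSeries.coeff_X_pow]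
    rw [if_neg (by omega), mul_zero, add_zero]

lemma Fseq_stab (n : ℕ) {i : ℕ} (hi : i ≤ n + 1) :
    PowerSeries.coeff i (Fseq ν A B c (n+1)) = PowerSeries.coeff i (Fseq ν A B c n) := by
  rw [Fseq, map_add]
  simp only [PowerSeries.coeff_C_mul, PowerSeries.coeff_X_pow]
  rw [if_neg (by omega), mul_zero, add_zero]

noncomputable def sol (ν : ℕ) (A B : PowerSeries ℂ) (c : ℂ) : PowerSeries ℂ :=
  PowerSeries.mk fun i => PowerSeries.coeff i (Fseq ν A B c i)

lemma sol_coeff (n : ℕ) : ∀ i ≤ n + 1,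
    PowerSeries.coeff i (sol ν A B c) = PowerSeries.coeff i (Fseq ν A B c n) := by
  induction n with
  | zero =>
    intro i hi
    rw [sol, PowerSeries.coeff_mk]
    interval_cases i
    · rfl
    · exact Fseq_stab 0 le_rfl
  | succ n ih =>
    intro i hi
    rcases Nat.lt_or_ge i (n+2) with h | h
    · rw [ih i (by omega), ← Fseq_stab n (by omega)]
    · have : i = n + 2 := by omega
      subst this
      rw [sol, PowerSeries.coeff_mk]
      exact Fseq_stab (n+1) (by omega)

lemma sol_zero : PowerSeries.coeff 0 (sol ν A B c) = 0 := by
  rw [sol, PowerSeries.coeff_mk]; exact Fseq_zero 0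

lemma sol_one : PowerSeries.coeff 1 (sol ν A B c) = c := by
  rw [sol, PowerSeries.coeff_mk]; exact Fseq_one 1

lemma sol_eqErr (hν : 1 ≤ ν) (hA0 : ∀ k < ν - 1, PowerSeries.coeff k A = 0)
    (ha : PowerSeries.coeff (ν-1) A ≠ 0) (hc : c ≠ 0)
    (hcν : PowerSeries.coeff (ν-1) A * c ^ ν = PowerSeries.constantCoeff B) :
    eqErr ν A B (sol ν A B c) = 0 := by
  ext m
  rw [map_zero, eqErr, map_sub]
  rcases Nat.lt_or_ge m (ν-1) with hm | hm
  · rw [lhs_low hA0 _ hm, PowerSeries.coeff_X_pow_mul' (pscomp B (sol ν A B c)) (ν-1) m,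
      if_neg (by omega), sub_zero]
  · rcases Nat.eq_or_lt_of_le hm with hm1 | hm2
    · -- m = ν - 1
      rw [← hm1, lhs_nu hA0 sol_zero, rhs_nu, sol_one]
      rw [show ν - 1 + 1 = ν by omega, hcν, sub_self]
    · -- m ≥ ν; set n = m - (ν-1) ≥ 1
      obtain ⟨n, hn1, rfl⟩ : ∃ n, 1 ≤ n ∧ m = n + (ν-1) := ⟨m - (ν-1), by omega, by omega⟩
      obtain ⟨n', rfl⟩ : ∃ n', n = n' + 1 := ⟨n - 1, by omega⟩
      set T := Fseq ν A B c n' with hT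
      set n := n' + 1 with hnn
      have hag : ∀ i ≤ n, PowerSeries.coeff i (sol ν A B c) = PowerSeries.coeff i T :=
        fun i hi => sol_coeff n' i hi
      have hT0 : PowerSeries.coeff 0 T = 0 := Fseq_zero n'
      have hT1 : PowerSeries.coeff 1 T = c := Fseq_one n'
      have hdiff := eqdiff hν hA0 sol_zero hT0 (by omega : 1 ≤ n) hag
      rw [sol_one] at hdiff
      have hTn1 : PowerSeries.coeff (n+1) T = 0 := Fseq_high n' (n+1) (by omega)
      have hsoln1 : PowerSeries.coeff (n+1) (sol ν A B c) = stepc ν A B T n := by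
        rw [sol_coeff n (n+1) le_rfl]
        show PowerSeries.coeff (n+1) (Fseq ν A B c (n'+1)) = _
        rw [Fseq, map_add, Fseq_high n' (n+1) (by omega)]
        simp [PowerSeries.coeff_X_pow]
        exact if_pos hnn
      have hrhs : PowerSeries.coeff (n + (ν-1)) (PowerSeries.X^(ν-1) * pscomp B (sol ν A B c))
          = PowerSeries.coeff (n + (ν-1)) (PowerSeries.X^(ν-1) * pscomp B T) := by
        rw [PowerSeries.coeff_X_pow_mul, PowerSeries.coeff_X_pow_mul]
        exact pscomp_congr B sol_zero hT0 (by omega) hag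
      set D := PowerSeries.coeff (ν-1) A * c^(ν-1) * ((n + ν : ℕ) : ℂ) with hD
      have hDne : D ≠ 0 := by
        exact mul_ne_zero (mul_ne_zero ha (pow_ne_zero _ hc))
          (Nat.cast_ne_zero.mpr (by omega : n + ν ≠ 0))
      have hstep : stepc ν A B T n =
          - PowerSeries.coeff (n + (ν-1)) (eqErr ν A B T) / D := by
        rw [stepc, hT1, hD]
      rw [hTn1, sub_zero, hsoln1, hstep] at hdiff
      have hE : PowerSeries.coeff (n + (ν-1)) (eqErr ν A B T) =
          PowerSeries.coeff (n + (ν-1)) (pscomp A T * T.derivativeFun) -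
          PowerSeries.coeff (n + (ν-1)) (PowerSeries.X^(ν-1) * pscomp B T) := by
        rw [eqErr, map_sub]
      rw [hrhs]
      have hcancel : D * (- PowerSeries.coeff (n + (ν-1)) (eqErr ν A B T) / D) =
          - PowerSeries.coeff (n + (ν-1)) (eqErr ν A B T) := by
        rw [mul_comm, div_mul_cancel₀ _ hDne]
      rw [hcancel] at hdiff
      linear_combination hdiff - hE

lemma sol_unique (hν : 1 ≤ ν) (hA0 : ∀ k < ν - 1, PowerSeries.coeff k A = 0)
    (ha : PowerSeries.coeff (ν-1) A ≠ 0) {s t : PowerSeries ℂ}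
    (hs : pscomp A s * s.derivativeFun = PowerSeries.X ^ (ν - 1) * pscomp B s)
    (ht : pscomp A t * t.derivativeFun = PowerSeries.X ^ (ν - 1) * pscomp B t)
    (hs0 : PowerSeries.coeff 0 s = 0) (ht0 : PowerSeries.coeff 0 t = 0)
    (h1 : PowerSeries.coeff 1 s = PowerSeries.coeff 1 t)
    (hc : PowerSeries.coeff 1 s ≠ 0) : s = t := by
  have key : ∀ n, 1 ≤ n → ∀ i ≤ n, PowerSeries.coeff i s = PowerSeries.coeff i t := by
    intro n hn
    induction n, hn using Nat.le_induction with
    | base =>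
      intro i hi
      interval_cases i
      · rw [hs0, ht0]
      · exact h1
    | succ n hn ih =>
      intro i hi
      rcases Nat.lt_or_ge i (n+1) with h | h
      · exact ih i (by omega)
      · have hieq : i = n + 1 := by omega
        subst hieq
        have hdiff := eqdiff hν hA0 hs0 ht0 hn ih
        have hrhs : PowerSeries.coeff (n + (ν-1)) (pscomp A s * s.derivativeFun) =
            PowerSeries.coeff (n + (ν-1)) (pscomp A t * t.derivativeFun) := by
          rw [hs, ht, PowerSeries.coeff_X_pow_mul, PowerSeries.coeff_X_pow_mul]
          exact pscomp_congr B hs0 ht0 hn ih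
        rw [hrhs, sub_self] at hdiff
        have hDne : PowerSeries.coeff (ν-1) A * (PowerSeries.coeff 1 s)^(ν-1) *
            ((n + ν : ℕ) : ℂ) ≠ 0 := by
          exact mul_ne_zero (mul_ne_zero ha (pow_ne_zero _ hc))
            (Nat.cast_ne_zero.mpr (by omega : n + ν ≠ 0))
        have := (mul_eq_zero.mp hdiff.symm).resolve_left hDne
        exact sub_eq_zero.mp this
  apply PowerSeries.ext
  intro n
  rcases Nat.eq_zero_or_pos n with rfl | hn
  · rw [hs0, ht0]
  · exact key n hn n le_rfl

lemma order_one_iff {s : PowerSeries ℂ} :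
    s.order = 1 ↔ PowerSeries.coeff 0 s = 0 ∧ PowerSeries.coeff 1 s ≠ 0 := by
  rw [show (1 : ℕ∞) = ((1 : ℕ) : ℕ∞) by norm_cast, PowerSeries.order_eq_nat]
  constructor
  · rintro ⟨h1, h2⟩; exact ⟨h2 0 one_pos, h1⟩
  · rintro ⟨h1, h2⟩; exact ⟨h2, fun i hi => by interval_cases i; exact h1⟩


/-- If `ord A = ν - 1` and `B(0) ≠ 0`, then the associated differential equation
`A(s(t)) s'(t) = t^{ν-1} B(s(t))` has exactly `ν` order-one formal power series
solutions, and each solution `s` satisfies `(coeff₁ s)^ν = B(0) / coeff_{ν-1}(A)`. -/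
theorem assoc_equation_solution_count
    (ν : ℕ) (hν : 1 ≤ ν) (A B : PowerSeries ℂ)
    (hA : A.order = ((ν - 1 : ℕ)))
    (hB : PowerSeries.constantCoeff B ≠ 0) :
    {s : PowerSeries ℂ | s.order = 1 ∧
        pscomp A s * s.derivativeFun = PowerSeries.X ^ (ν - 1) * pscomp B s}.ncard = ν ∧
    ∀ s : PowerSeries ℂ, s.order = 1 →
      pscomp A s * s.derivativeFun = PowerSeries.X ^ (ν - 1) * pscomp B s →
      (PowerSeries.coeff 1 s) ^ ν =
        PowerSeries.constantCoeff B / PowerSeries.coeff (ν - 1) A := by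
  obtain ⟨ha, hA0⟩ := PowerSeries.order_eq_nat.mp hA
  set a := PowerSeries.coeff (ν-1) A with haa
  set b := PowerSeries.constantCoeff B with hbb
  -- every solution satisfies a * c^ν = b
  have main : ∀ s : PowerSeries ℂ, s.order = 1 →
      pscomp A s * s.derivativeFun = PowerSeries.X ^ (ν - 1) * pscomp B s →
      a * (PowerSeries.coeff 1 s) ^ ν = b := by
    intro s hord heq
    obtain ⟨hs0, hs1⟩ := order_one_iff.mp hord
    have := congrArg (PowerSeries.coeff (ν-1)) heq
    rw [lhs_nu hA0 hs0, rhs_nu] at this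
    rw [show ν - 1 + 1 = ν by omega] at this
    exact this
  have second : ∀ s : PowerSeries ℂ, s.order = 1 →
      pscomp A s * s.derivativeFun = PowerSeries.X ^ (ν - 1) * pscomp B s →
      (PowerSeries.coeff 1 s) ^ ν = b / a := by
    intro s hord heq
    rw [eq_div_iff ha, mul_comm]
    exact main s hord heq
  refine ⟨?_, second⟩
  set S := {s : PowerSeries ℂ | s.order = 1 ∧
      pscomp A s * s.derivativeFun = PowerSeries.X ^ (ν - 1) * pscomp B s} with hS
  have hinj : Set.InjOn (PowerSeries.coeff 1) S := by
    intro s hsS t htS h1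
    obtain ⟨hs0, hs1⟩ := order_one_iff.mp hsS.1
    obtain ⟨ht0, _⟩ := order_one_iff.mp htS.1
    exact sol_unique hν hA0 ha hsS.2 htS.2 hs0 ht0 h1 hs1
  have himg : (PowerSeries.coeff 1) '' S = {c : ℂ | c ^ ν = b / a} := by
    ext x
    constructor
    · rintro ⟨s, hsS, rfl⟩
      exact second s hsS.1 hsS.2
    · intro hx
      have hx0 : x ≠ 0 := by
        rintro rfl
        rw [Set.mem_setOf_eq, zero_pow (by omega : ν ≠ 0)] at hx
        exact div_ne_zero hB ha hx.symm
      have hax : a * x ^ ν = b := by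
        rw [Set.mem_setOf_eq] at hx
        rw [hx, mul_div_cancel₀ _ ha]
      have hsol := sol_eqErr (A := A) (B := B) (c := x) hν hA0 ha hx0 hax
      rw [eqErr, sub_eq_zero] at hsol
      exact ⟨sol ν A B x, ⟨order_one_iff.mpr ⟨sol_zero, by rw [sol_one]; exact hx0⟩, hsol⟩,
        sol_one⟩
  rw [← Set.ncard_image_of_injOn hinj, himg]
  exact roots_ncard ν hν (b/a) (div_ne_zero hB ha)
end
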